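/- arXiv:1206.2941 — 2 statements merged into one kernel-verified Lean document; each statement's English description precedes it below -/
import Mathlib

section
/- Let G be an ∞-groupoid of type C. The groupoid Π_n(G) does not depend on the choice of the lifting morphisms ∇_n : D_n → D_n ∐_{D_{n-1}} D_n and κ_{n-1} : D_n → D_{n-1} in C used to define composition and units: if ∇'_n and κ'_{n-1} are other liftings with the same globular source and target, the induced groupoid structures on Π_n(G) coincide. -/
/-!
STATEMENT 5: Let `G` be an ∞-groupoid of type `C`.  The groupoid `Π_n(G)` does not
depend on the choice of the liftings `∇_n : D_n ⟶ D_n ∐_{D_{n-1}} D_n` and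
`κ_{n-1} : D_n ⟶ D_{n-1}` in `C` used to define composition and units: if `∇'_n`
and `κ'_{n-1}` are other liftings with the same globular source and target, the
induced groupoid structures on `Π_n(G)` coincide, i.e. the induced compositions and
units agree up to homotopy (hence agree after passing to the quotient `Π_n(G)`).
Here `n = m + 1`.
-/

open CategoryTheory Opposite

universe w v u

/-- A coglobular object: a category under the globe category 𝔾. -/
structure Coglob (E : Type u) [Category.{v} E] where
  D : ℕ → E
  σ : ∀ n, D n ⟶ D (n + 1)
  τ : ∀ n, D n ⟶ D (n + 1)
  relσ : ∀ n, σ n ≫ σ (n + 1) = σ n ≫ τ (n + 1)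
  relτ : ∀ n, τ n ≫ σ (n + 1) = τ n ≫ τ (n + 1)

namespace Coglob

variable {E : Type u} [Category.{v} E] (Φ : Coglob E)

/-- Iterated cosource `σ^{j+k}_j : D j ⟶ D (j+k)`. -/
def σUp (j : ℕ) : ∀ k : ℕ, Φ.D j ⟶ Φ.D (j + k)
  | 0 => 𝟙 _
  | k + 1 => σUp j k ≫ Φ.σ (j + k)

/-- Iterated cotarget `τ^{j+k}_j : D j ⟶ D (j+k)`. -/
def τUp (j : ℕ) : ∀ k : ℕ, Φ.D j ⟶ Φ.D (j + k)
  | 0 => 𝟙 _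
  | k + 1 => τUp j k ≫ Φ.τ (j + k)

lemma τUp_σ (j k : ℕ) :
    Φ.τUp j (k + 1) ≫ Φ.σ (j + k + 1) = Φ.τUp j (k + 2) := by
  show (Φ.τUp j k ≫ Φ.τ (j + k)) ≫ Φ.σ (j + k + 1) =
    (Φ.τUp j k ≫ Φ.τ (j + k)) ≫ Φ.τ (j + k + 1)
  rw [Category.assoc, Category.assoc, Φ.relτ]

lemma σUp_τ (j k : ℕ) :
    Φ.σUp j (k + 1) ≫ Φ.τ (j + k + 1) = Φ.σUp j (k + 2) := by
  show (Φ.σUp j k ≫ Φ.σ (j + k)) ≫ Φ.τ (j + k + 1) =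
    (Φ.σUp j k ≫ Φ.σ (j + k)) ≫ Φ.σ (j + k + 1)
  rw [Category.assoc, Category.assoc, Φ.relσ]

/-- Iterated cosource `D 0 ⟶ D n`. -/
def σZero : ∀ n : ℕ, Φ.D 0 ⟶ Φ.D n
  | 0 => 𝟙 _
  | n + 1 => σZero n ≫ Φ.σ n

/-- Globular parallelism of two morphisms with source a globe `D n`. -/
def Par : ∀ {n : ℕ} {Y : E}, (Φ.D n ⟶ Y) → (Φ.D n ⟶ Y) → Prop
  | 0, _, _, _ => True
  | m + 1, _, f, g => (Φ.σ m ≫ f = Φ.σ m ≫ g) ∧ (Φ.τ m ≫ f = Φ.τ m ≫ g)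

end Coglob

/-- Tables of dimensions, indexed by the dimension of the first globe: the table
`cons j d e T` glues a disk of dimension `j + d + 1` along the dimension `j` onto a
table whose first dimension is `j + e + 1` (so that both dimensions exceed the
gluing dimension, as required for a table of dimensions). -/
inductive GTable : ℕ → Type where
  | single (i : ℕ) : GTable i
  | cons (j d e : ℕ) (T : GTable (j + e + 1)) : GTable (j + d + 1)

/-- Dimension of a table: the greatest dimension appearing in it. -/
def GTable.dim : ∀ {i : ℕ}, GTable i → ℕ
  | _, .single i => i
  | _, .cons j d _ T => max (j + d + 1) T.dim

/-- Chosen globular sums on a category under 𝔾: for every table of dimensions, an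
iterated amalgamated sum of globes, glued along iterated cosources and cotargets,
with its universal property. This is the structure of a globular extension. -/
structure GSums {E : Type u} [Category.{v} E] (Φ : Coglob E) where
  S : ∀ {i : ℕ}, GTable i → E
  single_eq : ∀ i, S (.single i) = Φ.D i
  ι : ∀ {i : ℕ} (T : GTable i), Φ.D i ⟶ S T
  ι_single : ∀ i, ι (.single i) = eqToHom (single_eq i).symm
  ρ : ∀ {j d e : ℕ} (T : GTable (j + e + 1)), S T ⟶ S (.cons j d e T)
  glue : ∀ {j d e : ℕ} (T : GTable (j + e + 1)),
    Φ.σUp j (d + 1) ≫ ι (.cons j d e T) = Φ.τUp j (e + 1) ≫ ι T ≫ ρ T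
  desc : ∀ {j d e : ℕ} (T : GTable (j + e + 1)) {Y : E}
    (f : Φ.D (j + d + 1) ⟶ Y) (g : S T ⟶ Y),
    Φ.σUp j (d + 1) ≫ f = Φ.τUp j (e + 1) ≫ ι T ≫ g → (S (.cons j d e T) ⟶ Y)
  ι_desc : ∀ {j d e : ℕ} (T : GTable (j + e + 1)) {Y : E}
    (f : Φ.D (j + d + 1) ⟶ Y) (g : S T ⟶ Y) (h), ι (.cons j d e T) ≫ desc T f g h = f
  ρ_desc : ∀ {j d e : ℕ} (T : GTable (j + e + 1)) {Y : E}
    (f : Φ.D (j + d + 1) ⟶ Y) (g : S T ⟶ Y) (h), ρ T ≫ desc T f g h = g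
  hom_ext : ∀ {j d e : ℕ} (T : GTable (j + e + 1)) {Y : E}
    (m m' : S (.cons j d e T) ⟶ Y),
    ι (.cons j d e T) ≫ m = ι (.cons j d e T) ≫ m' → ρ T ≫ m = ρ T ≫ m' → m = m'

namespace GSums

variable {E : Type u} [Category.{v} E] {Φ : Coglob E} (GS : GSums Φ)

/-- The binary globular sum `D (j+k+1) ∐_{D j} D (j+k+1)`. -/
def Btab (j k : ℕ) : GTable (j + k + 1) := .cons j k k (.single (j + k + 1))

/-- First canonical morphism `ε₁ : D (j+k+1) ⟶ D (j+k+1) ∐_{D j} D (j+k+1)`. -/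
def ε₁ (j k : ℕ) : Φ.D (j + k + 1) ⟶ GS.S (Btab j k) := GS.ι (Btab j k)

/-- Second canonical morphism `ε₂ : D (j+k+1) ⟶ D (j+k+1) ∐_{D j} D (j+k+1)`. -/
def ε₂ (j k : ℕ) : Φ.D (j + k + 1) ⟶ GS.S (Btab j k) :=
  eqToHom (GS.single_eq (j + k + 1)).symm ≫ GS.ρ (GTable.single (j + k + 1))

/-- `C` is `(∞,0)`-contractible: every admissible pair admits a lifting; a pair
`(f, g) : D n ⟶ S` is admissible when `S` is a globular sum of dimension `≤ n + 1`
and `f, g` are globularly parallel. -/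
def Contractible : Prop :=
  ∀ (n : ℕ) {i : ℕ} (T : GTable i), T.dim ≤ n + 1 →
    ∀ f g : Φ.D n ⟶ GS.S T, Φ.Par f g →
      ∃ h : Φ.D (n + 1) ⟶ GS.S T, Φ.σ n ≫ h = f ∧ Φ.τ n ≫ h = g

/-- A presheaf `X` on `C` is a model (an ∞-groupoid of type `C`) when it sends each
globular sum to the corresponding iterated fiber product; equivalently each
amalgamation stage is sent to a pullback of sets. -/
def IsModel (X : Eᵒᵖ ⥤ Type w) : Prop :=
  ∀ {j d e : ℕ} (T : GTable (j + e + 1))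
    (a : X.obj (op (Φ.D (j + d + 1)))) (b : X.obj (op (GS.S T))),
    X.map (Φ.σUp j (d + 1)).op a = X.map (Φ.τUp j (e + 1) ≫ GS.ι T).op b →
      ∃! x : X.obj (op (GS.S (.cons j d e T))),
        X.map (GS.ι (.cons j d e T)).op x = a ∧ X.map (GS.ρ T).op x = b

/-- The amalgamated sum `f ∐_{D j} f` of an endo-cosimplicial-type map of globes. -/
def amalgMap (j k : ℕ) (f : Φ.D (j + k + 1) ⟶ Φ.D (j + k + 2))
    (hσ : Φ.σUp j (k + 1) ≫ f = Φ.σUp j (k + 2))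
    (hτ : Φ.τUp j (k + 1) ≫ f = Φ.τUp j (k + 2)) :
    GS.S (Btab j k) ⟶ GS.S (Btab j (k + 1)) :=
  GS.desc (GTable.single (j + k + 1)) (f ≫ GS.ε₁ j (k + 1))
    (eqToHom (GS.single_eq (j + k + 1)) ≫ f ≫ GS.ε₂ j (k + 1)) (by
      have h1 := GS.glue (j := j) (d := k + 1) (e := k + 1) (GTable.single (j + (k + 1) + 1))
      rw [GS.ι_single] at h1
      simp only [GS.ι_single, ← Category.assoc, hσ]
      simp only [Category.assoc, eqToHom_trans, eqToHom_refl, Category.id_comp]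
      rw [← Category.assoc, hτ]
      exact h1)

/-- The amalgamated sum `σ ∐_{D j} σ`. -/
def amalgσ (j k : ℕ) : GS.S (Btab j k) ⟶ GS.S (Btab j (k + 1)) :=
  GS.amalgMap j k (Φ.σ (j + k + 1)) rfl (Φ.τUp_σ j k)

/-- The amalgamated sum `τ ∐_{D j} τ`. -/
def amalgτ (j k : ℕ) : GS.S (Btab j k) ⟶ GS.S (Btab j (k + 1)) :=
  GS.amalgMap j k (Φ.τ (j + k + 1)) (Φ.σUp_τ j k) rfl

end GSums

/-- A pregroupoidal structure on a (contractible) globular extension: chosen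
coherence morphisms `∇^i_j`, `κ_i` and `w^i_j` for compositions, units and inverses,
each a lifting of the corresponding admissible pair. -/
structure Pregroupoidal {E : Type u} [Category.{v} E] {Φ : Coglob E} (GS : GSums Φ) where
  nabla : ∀ j k, Φ.D (j + k + 1) ⟶ GS.S (GSums.Btab j k)
  kappa : ∀ n, Φ.D (n + 1) ⟶ Φ.D n
  winv : ∀ j k, Φ.D (j + k + 1) ⟶ Φ.D (j + k + 1)
  kappa_σ : ∀ n, Φ.σ n ≫ kappa n = 𝟙 (Φ.D n)
  kappa_τ : ∀ n, Φ.τ n ≫ kappa n = 𝟙 (Φ.D n)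
  nabla_σ₀ : ∀ j, Φ.σ j ≫ nabla j 0 = Φ.σ j ≫ GS.ε₂ j 0
  nabla_τ₀ : ∀ j, Φ.τ j ≫ nabla j 0 = Φ.τ j ≫ GS.ε₁ j 0
  nabla_σ : ∀ j k, Φ.σ (j + k + 1) ≫ nabla j (k + 1) = nabla j k ≫ GS.amalgσ j k
  nabla_τ : ∀ j k, Φ.τ (j + k + 1) ≫ nabla j (k + 1) = nabla j k ≫ GS.amalgτ j k
  winv_σ₀ : ∀ j, Φ.σ j ≫ winv j 0 = Φ.τ j
  winv_τ₀ : ∀ j, Φ.τ j ≫ winv j 0 = Φ.σ j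
  winv_σ : ∀ j k, Φ.σ (j + k + 1) ≫ winv j (k + 1) = winv j k ≫ Φ.σ (j + k + 1)
  winv_τ : ∀ j k, Φ.τ (j + k + 1) ≫ winv j (k + 1) = winv j k ≫ Φ.τ (j + k + 1)

section ModelOps

variable {E : Type u} [Category.{v} E] {Φ : Coglob E} {GS : GSums Φ}
variable (X : Eᵒᵖ ⥤ Type w)

/-- The set of `n`-arrows of a globular presheaf. -/
def arr (n : ℕ) : Type w := X.obj (op (Φ.D n))

variable {X}

/-- Source of an `(n+1)`-arrow. -/
def asrc {n : ℕ} (u : arr (Φ := Φ) X (n + 1)) : arr (Φ := Φ) X n :=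
  X.map (Φ.σ n).op u

/-- Target of an `(n+1)`-arrow. -/
def atgt {n : ℕ} (u : arr (Φ := Φ) X (n + 1)) : arr (Φ := Φ) X n :=
  X.map (Φ.τ n).op u

/-- Homotopy of `n`-arrows: existence of a connecting `(n+1)`-arrow. -/
def Htp (n : ℕ) (u v : arr (Φ := Φ) X n) : Prop :=
  ∃ h : arr (Φ := Φ) X (n + 1), asrc h = u ∧ atgt h = v

/-- Composability in codimension `k+1`: the iterated `j`-source of `u` agrees with
the iterated `j`-target of `v`. -/
def Composable (j k : ℕ) (u v : arr (Φ := Φ) X (j + k + 1)) : Prop :=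
  X.map (Φ.σUp j (k + 1)).op u = X.map (Φ.τUp j (k + 1)).op v

/-- The element of `X` of the binary globular sum determined by a composable pair,
via the model (fiber product) condition. -/
noncomputable def pairUp (hm : GS.IsModel X) {j k : ℕ}
    (u v : arr (Φ := Φ) X (j + k + 1)) (hc : Composable j k u v) :
    X.obj (op (GS.S (GSums.Btab j k))) :=
  (hm (GTable.single (j + k + 1)) u
    (X.map (eqToHom (GS.single_eq (j + k + 1))).op v) (by
      erw [← FunctorToTypes.map_comp_apply, ← op_comp, Category.assoc, GS.ι_single,
        eqToHom_trans, eqToHom_refl, Category.comp_id]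
      exact hc)).exists.choose

/-- The composition `u *^{j+k+1}_j v` of arrows (`u` after `v`) induced by the chosen
morphism `∇^{j+k+1}_j`; defined as `u` on non-composable pairs. -/
noncomputable def gcomp (hm : GS.IsModel X) (P : Pregroupoidal GS)
    (j k : ℕ) (u v : arr (Φ := Φ) X (j + k + 1)) : arr (Φ := Φ) X (j + k + 1) := by
  classical
  exact if hc : Composable j k u v then X.map (P.nabla j k).op (pairUp hm u v hc) else u

/-- The unit `(n+1)`-arrow on an `n`-arrow, induced by `κ_n`. -/
def gunit (P : Pregroupoidal GS) {n : ℕ} (u : arr (Φ := Φ) X n) :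
    arr (Φ := Φ) X (n + 1) :=
  X.map (P.kappa n).op u

/-- The inverse `w^{j}_{j+k+1}` of an arrow. -/
def gwinv (P : Pregroupoidal GS) (j k : ℕ) (u : arr (Φ := Φ) X (j + k + 1)) :
    arr (Φ := Φ) X (j + k + 1) :=
  X.map (P.winv j k).op u

/-- Iterated counit `D n ⟶ D 0`. -/
def kDown (P : Pregroupoidal GS) : ∀ n : ℕ, Φ.D n ⟶ Φ.D 0
  | 0 => 𝟙 _
  | n + 1 => P.kappa n ≫ kDown P n

/-- The iterated unit `n`-arrow on an object. -/
def unitIter (P : Pregroupoidal GS) (n : ℕ) (x : arr (Φ := Φ) X 0) :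
    arr (Φ := Φ) X n :=
  X.map (kDown P n).op x

end ModelOps

theorem Pi_n_independent {E : Type u} [Category.{v} E] (Φ : Coglob E) (GS : GSums Φ)
    (hC : GS.Contractible) (X : Eᵒᵖ ⥤ Type w) (hm : GS.IsModel X)
    (P : Pregroupoidal GS) (m : ℕ)
    -- another lifting `∇'_n` with the same globular source and target
    (nabla' : Φ.D (m + 1) ⟶ GS.S (GSums.Btab m 0))
    (hσ' : Φ.σ m ≫ nabla' = Φ.σ m ≫ GS.ε₂ m 0)
    (hτ' : Φ.τ m ≫ nabla' = Φ.τ m ≫ GS.ε₁ m 0)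
    -- another lifting `κ'_{n-1}` with the same globular source and target
    (kappa' : Φ.D (m + 1) ⟶ Φ.D m)
    (hκσ' : Φ.σ m ≫ kappa' = 𝟙 (Φ.D m))
    (hκτ' : Φ.τ m ≫ kappa' = 𝟙 (Φ.D m)) :
    -- the two induced compositions agree up to homotopy ...
    (∀ (u v : arr (Φ := Φ) X (m + 1)) (hc : Composable m 0 u v),
      Htp (m + 1) (gcomp hm P m 0 u v) (X.map nabla'.op (pairUp hm u v hc))) ∧
    -- ... and so do the two induced units
    (∀ z : arr (Φ := Φ) X m,
      Htp (m + 1) (gunit P z) (X.map kappa'.op z)) := by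
  constructor
  · -- compositions
    obtain ⟨h, hhσ, hhτ⟩ := hC (m + 1) (GSums.Btab m 0)
      (by simp [GSums.Btab, GTable.dim])
      (P.nabla m 0) nabla'
      ⟨(P.nabla_σ₀ m).trans hσ'.symm, (P.nabla_τ₀ m).trans hτ'.symm⟩
    intro u v hc
    refine ⟨X.map h.op (pairUp hm u v hc), ?_, ?_⟩
    · show X.map (Φ.σ (m + 1)).op (X.map h.op _) = _
      rw [← FunctorToTypes.map_comp_apply, ← op_comp, hhσ]
      simp [gcomp, hc]
    · show X.map (Φ.τ (m + 1)).op (X.map h.op _) = _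
      rw [← FunctorToTypes.map_comp_apply, ← op_comp, hhτ]
  · -- units
    obtain ⟨h, hhσ, hhτ⟩ := hC (m + 1) (GTable.single m)
      (by simp [GTable.dim]; omega)
      (P.kappa m ≫ eqToHom (GS.single_eq m).symm)
      (kappa' ≫ eqToHom (GS.single_eq m).symm)
      ⟨by rw [← Category.assoc, ← Category.assoc, P.kappa_σ, hκσ'],
       by rw [← Category.assoc, ← Category.assoc, P.kappa_τ, hκτ']⟩
    intro z
    refine ⟨X.map (h ≫ eqToHom (GS.single_eq m)).op z, ?_, ?_⟩
    · show X.map (Φ.σ (m + 1)).op (X.map _ z) = _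
      erw [← FunctorToTypes.map_comp_apply, ← op_comp, ← Category.assoc, hhσ]
      simp [gunit]
    · show X.map (Φ.τ (m + 1)).op (X.map _ z) = _
      erw [← FunctorToTypes.map_comp_apply, ← op_comp, ← Category.assoc, hhτ]
      simp
end

section
/- For n ≥ 2 and any object x of an ∞-groupoid G of type C, the group π_n(G, x) is abelian (by the Eckmann–Hilton argument applied to the two compositions *^n_{n-1} and *^n_{n-2} on n-arrows with all sources and targets equal to iterated units on x). -/
/-!
STATEMENT 9: For `n ≥ 2` (written `n = k + 2`) and any object `x` of an ∞-groupoid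
`G` of type `C`, the group `π_n(G, x)` is abelian (Eckmann–Hilton, using the two
compositions `*^n_{n-1}` and `*^n_{n-2}` on `n`-arrows whose sources and targets are
iterated units on `x`).  Commutativity in the quotient group is expressed at the
level of representatives: the two composites are homotopic.
-/

open CategoryTheory Opposite

universe w v u

section EckmannHilton

open GSums

attribute [reducible] arr Btab

variable {E : Type u} [Category.{v} E] {Φ : Coglob E} {GS : GSums Φ} {X : Eᵒᵖ ⥤ Type w}

/-- Pullback of an element of a presheaf along a morphism. -/
def pull {A B : E} (f : A ⟶ B) (ξ : X.obj (op B)) : X.obj (op A) := X.map f.op ξ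

lemma pull_comp {A B C : E} (f : A ⟶ B) (g : B ⟶ C) (ξ : X.obj (op C)) :
    pull (f ≫ g) ξ = pull f (pull g ξ) := by
  simp [pull, op_comp, FunctorToTypes.map_comp_apply]

lemma pull_id {A : E} (ξ : X.obj (op A)) : pull (𝟙 A) ξ = ξ := by simp [pull]

lemma asrc_eq_pull {n : ℕ} (z : arr (Φ := Φ) X (n + 1)) : asrc z = pull (Φ.σ n) z := rfl
lemma atgt_eq_pull {n : ℕ} (z : arr (Φ := Φ) X (n + 1)) : atgt z = pull (Φ.τ n) z := rfl
lemma gunit_eq_pull (P : Pregroupoidal GS) {n : ℕ} (z : arr (Φ := Φ) X n) :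
    gunit P z = pull (P.kappa n) z := rfl
lemma gwinv_eq_pull (P : Pregroupoidal GS) (j k : ℕ) (z : arr (Φ := Φ) X (j + k + 1)) :
    gwinv P j k z = pull (P.winv j k) z := rfl
lemma unitIter_eq_pull (P : Pregroupoidal GS) (n : ℕ) (x : arr (Φ := Φ) X 0) :
    unitIter P n x = pull (kDown P n) x := rfl

lemma composable_def {j k : ℕ} (u v : arr (Φ := Φ) X (j + k + 1)) :
    Composable j k u v ↔ pull (Φ.σUp j (k + 1)) u = pull (Φ.τUp j (k + 1)) v := Iff.rfl

/-- basic spec of `pairUp`. -/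
lemma pairUp_spec (hm : GS.IsModel X) {j k : ℕ} (u v : arr (Φ := Φ) X (j + k + 1))
    (hc : Composable j k u v) :
    pull (GS.ι (GSums.Btab j k)) (pairUp hm u v hc) = u ∧
      pull (GS.ρ (GTable.single (j + k + 1))) (pairUp hm u v hc)
        = pull (eqToHom (GS.single_eq (j + k + 1))) v :=
  (hm (GTable.single (j + k + 1)) u
    (X.map (eqToHom (GS.single_eq (j + k + 1))).op v) (by
      rw [← FunctorToTypes.map_comp_apply, ← op_comp, Category.assoc, GS.ι_single,
        eqToHom_trans, eqToHom_refl, Category.comp_id]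
      exact hc)).exists.choose_spec

lemma pairUp_ι (hm : GS.IsModel X) {j k : ℕ} (u v : arr (Φ := Φ) X (j + k + 1))
    (hc : Composable j k u v) :
    pull (GS.ι (GSums.Btab j k)) (pairUp hm u v hc) = u := (pairUp_spec hm u v hc).1

lemma ρ_eq_ε₂ (j k : ℕ) :
    GS.ρ (GTable.single (j + k + 1)) = eqToHom (GS.single_eq (j + k + 1)) ≫ GS.ε₂ j k := by
  simp [GSums.ε₂]

lemma pairUp_ε₂ (hm : GS.IsModel X) {j k : ℕ} (u v : arr (Φ := Φ) X (j + k + 1))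
    (hc : Composable j k u v) :
    pull (GS.ε₂ j k) (pairUp hm u v hc) = v := by
  have h := (pairUp_spec hm u v hc).2
  have : pull (GSums.ε₂ (GS := GS) j k) (pairUp hm u v hc)
      = pull (eqToHom (GS.single_eq (j + k + 1)).symm)
          (pull (GS.ρ (GTable.single (j + k + 1))) (pairUp hm u v hc)) := by
    rw [← pull_comp]; rfl
  rw [this, h, ← pull_comp, eqToHom_trans, eqToHom_refl, pull_id]

lemma pairUp_unique (hm : GS.IsModel X) {j k : ℕ} {u v : arr (Φ := Φ) X (j + k + 1)}
    (hc : Composable j k u v) (ζ : X.obj (op (GS.S (GSums.Btab j k))))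
    (h1 : pull (GS.ι (GSums.Btab j k)) ζ = u) (h2 : pull (GS.ε₂ j k) ζ = v) :
    ζ = pairUp hm u v hc := by
  refine (hm (GTable.single (j + k + 1)) u
    (X.map (eqToHom (GS.single_eq (j + k + 1))).op v) (by
      rw [← FunctorToTypes.map_comp_apply, ← op_comp, Category.assoc, GS.ι_single,
        eqToHom_trans, eqToHom_refl, Category.comp_id]
      exact hc)).unique ⟨h1, ?_⟩ ⟨(pairUp_spec hm u v hc).1, (pairUp_spec hm u v hc).2⟩
  show pull (GS.ρ (GTable.single (j + k + 1))) ζ = pull (eqToHom (GS.single_eq (j + k + 1))) v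
  rw [ρ_eq_ε₂, pull_comp, h2]

lemma gcomp_eq (hm : GS.IsModel X) (P : Pregroupoidal GS) {j k : ℕ}
    (u v : arr (Φ := Φ) X (j + k + 1)) (hc : Composable j k u v) :
    gcomp hm P j k u v = pull (P.nabla j k) (pairUp hm u v hc) := by
  unfold gcomp
  split
  · rfl
  · exact absurd hc ‹_›

/-- `desc` against a binary sum, with the second leg given on the globe. -/
def bdm {j k : ℕ} {Y : E} (GS : GSums Φ) (f g : Φ.D (j + k + 1) ⟶ Y)
    (hgl : Φ.σUp j (k + 1) ≫ f = Φ.τUp j (k + 1) ≫ g) : GS.S (GSums.Btab j k) ⟶ Y :=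
  GS.desc (GTable.single (j + k + 1)) f (eqToHom (GS.single_eq (j + k + 1)) ≫ g)
    (by rw [GS.ι_single, hgl]; simp)

lemma ι_bdm {j k : ℕ} {Y : E} (f g : Φ.D (j + k + 1) ⟶ Y) (hgl) :
    GS.ι (GSums.Btab j k) ≫ bdm GS f g hgl = f :=
  GS.ι_desc _ _ _ _

lemma ε₂_bdm {j k : ℕ} {Y : E} (f g : Φ.D (j + k + 1) ⟶ Y) (hgl) :
    GS.ε₂ j k ≫ bdm GS f g hgl = g := by
  rw [GSums.ε₂, Category.assoc, bdm, GS.ρ_desc]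
  simp

lemma bdm_congr {j k : ℕ} {Y : E} {f f' g g' : Φ.D (j + k + 1) ⟶ Y} (hgl hgl')
    (hf : f = f') (hg : g = g') : bdm GS f g hgl = bdm GS f' g' hgl' := by
  cases hf; cases hg; rfl

lemma bdm_ext {j k : ℕ} {Y : E} (m m' : GS.S (GSums.Btab j k) ⟶ Y)
    (h1 : GS.ι (GSums.Btab j k) ≫ m = GS.ι (GSums.Btab j k) ≫ m')
    (h2 : GS.ε₂ j k ≫ m = GS.ε₂ j k ≫ m') : m = m' := by
  refine GS.hom_ext _ m m' h1 ?_
  rw [ρ_eq_ε₂ j k, Category.assoc, Category.assoc, h2]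

lemma composable_pull {j k : ℕ} {Y : E} (f g : Φ.D (j + k + 1) ⟶ Y)
    (hgl : Φ.σUp j (k + 1) ≫ f = Φ.τUp j (k + 1) ≫ g) (ξ : X.obj (op Y)) :
    Composable j k (pull (X := X) f ξ) (pull g ξ) := by
  show pull (Φ.σUp j (k + 1)) (pull f ξ) = pull (Φ.τUp j (k + 1)) (pull g ξ)
  rw [← pull_comp, ← pull_comp, hgl]

lemma pull_bdm (hm : GS.IsModel X) {j k : ℕ} {Y : E} (f g : Φ.D (j + k + 1) ⟶ Y)
    (hgl) (ξ : X.obj (op Y)) :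
    pull (bdm GS f g hgl) ξ = pairUp hm (pull f ξ) (pull g ξ) (composable_pull f g hgl ξ) :=
  pairUp_unique hm _ _ (by rw [← pull_comp, ι_bdm]) (by rw [← pull_comp, ε₂_bdm])

lemma pull_nabla_bdm (hm : GS.IsModel X) (P : Pregroupoidal GS) {j k : ℕ} {Y : E}
    (f g : Φ.D (j + k + 1) ⟶ Y) (hgl) (ξ : X.obj (op Y)) :
    pull (P.nabla j k ≫ bdm GS f g hgl) ξ = gcomp hm P j k (pull f ξ) (pull g ξ) := by
  rw [pull_comp, pull_bdm hm f g hgl ξ, gcomp_eq hm P _ _ (composable_pull f g hgl ξ)]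

/-! Boundaries of composite morphisms. -/

lemma σ_nbdm0 (P : Pregroupoidal GS) {j : ℕ} {Y : E} (f g : Φ.D (j + 0 + 1) ⟶ Y) (hgl) :
    Φ.σ j ≫ (P.nabla j 0 ≫ bdm GS f g hgl) = Φ.σ j ≫ g := by
  rw [← Category.assoc, P.nabla_σ₀, Category.assoc, ε₂_bdm]

lemma τ_nbdm0 (P : Pregroupoidal GS) {j : ℕ} {Y : E} (f g : Φ.D (j + 0 + 1) ⟶ Y) (hgl) :
    Φ.τ j ≫ (P.nabla j 0 ≫ bdm GS f g hgl) = Φ.τ j ≫ f := by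
  rw [← Category.assoc, P.nabla_τ₀, Category.assoc]
  show Φ.τ j ≫ GS.ι (GSums.Btab j 0) ≫ bdm GS f g hgl = _
  rw [ι_bdm]

lemma ι_amalgσ (j k : ℕ) :
    GS.ι (GSums.Btab j k) ≫ GS.amalgσ j k = Φ.σ (j + k + 1) ≫ GS.ε₁ j (k + 1) :=
  GS.ι_desc _ _ _ _

lemma ι_amalgτ (j k : ℕ) :
    GS.ι (GSums.Btab j k) ≫ GS.amalgτ j k = Φ.τ (j + k + 1) ≫ GS.ε₁ j (k + 1) :=
  GS.ι_desc _ _ _ _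

lemma ε₂_amalgσ (j k : ℕ) :
    GS.ε₂ j k ≫ GS.amalgσ j k = Φ.σ (j + k + 1) ≫ GS.ε₂ j (k + 1) := by
  rw [GSums.ε₂, Category.assoc, GSums.amalgσ]
  unfold GSums.amalgMap
  rw [GS.ρ_desc]
  simp

lemma ε₂_amalgτ (j k : ℕ) :
    GS.ε₂ j k ≫ GS.amalgτ j k = Φ.τ (j + k + 1) ≫ GS.ε₂ j (k + 1) := by
  rw [GSums.ε₂, Category.assoc, GSums.amalgτ]
  unfold GSums.amalgMap
  rw [GS.ρ_desc]
  simp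

lemma amalgσ_bdm {j k : ℕ} {Y : E} (f g : Φ.D (j + (k + 1) + 1) ⟶ Y) (hgl) (hgl') :
    GS.amalgσ j k ≫ bdm GS f g hgl
      = bdm GS (Φ.σ (j + k + 1) ≫ f) (Φ.σ (j + k + 1) ≫ g) hgl' := by
  refine bdm_ext _ _ ?_ ?_
  · rw [← Category.assoc, ι_amalgσ, Category.assoc, ι_bdm]
    show _ = Φ.σ (j + k + 1) ≫ f
    rw [GSums.ε₁, ι_bdm]
  · rw [← Category.assoc, ε₂_amalgσ, Category.assoc, ε₂_bdm, ε₂_bdm]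

lemma amalgτ_bdm {j k : ℕ} {Y : E} (f g : Φ.D (j + (k + 1) + 1) ⟶ Y) (hgl) (hgl') :
    GS.amalgτ j k ≫ bdm GS f g hgl
      = bdm GS (Φ.τ (j + k + 1) ≫ f) (Φ.τ (j + k + 1) ≫ g) hgl' := by
  refine bdm_ext _ _ ?_ ?_
  · rw [← Category.assoc, ι_amalgτ, Category.assoc, ι_bdm]
    show _ = Φ.τ (j + k + 1) ≫ f
    rw [GSums.ε₁, ι_bdm]
  · rw [← Category.assoc, ε₂_amalgτ, Category.assoc, ε₂_bdm, ε₂_bdm]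

lemma σ_nbdm1 (P : Pregroupoidal GS) {j k : ℕ} {Y : E}
    (f g : Φ.D (j + (k + 1) + 1) ⟶ Y) (hgl) (hgl') :
    Φ.σ (j + k + 1) ≫ (P.nabla j (k + 1) ≫ bdm GS f g hgl)
      = P.nabla j k ≫ bdm GS (Φ.σ (j + k + 1) ≫ f) (Φ.σ (j + k + 1) ≫ g) hgl' := by
  rw [← Category.assoc, P.nabla_σ, Category.assoc, amalgσ_bdm _ _ hgl hgl']

lemma τ_nbdm1 (P : Pregroupoidal GS) {j k : ℕ} {Y : E}
    (f g : Φ.D (j + (k + 1) + 1) ⟶ Y) (hgl) (hgl') :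
    Φ.τ (j + k + 1) ≫ (P.nabla j (k + 1) ≫ bdm GS f g hgl)
      = P.nabla j k ≫ bdm GS (Φ.τ (j + k + 1) ≫ f) (Φ.τ (j + k + 1) ≫ g) hgl' := by
  rw [← Category.assoc, P.nabla_τ, Category.assoc, amalgτ_bdm _ _ hgl hgl']

/-- Map-level gluing identity of the binary sum. -/
lemma glue' (j k : ℕ) :
    Φ.σUp j (k + 1) ≫ GS.ε₁ j k = Φ.τUp j (k + 1) ≫ GS.ε₂ j k := by
  have h := GS.glue (j := j) (d := k) (e := k) (GTable.single (j + k + 1))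
  rw [GS.ι_single] at h
  simpa [GSums.ε₁, GSums.ε₂] using h

lemma σUp_two (m : ℕ) : Φ.σUp m 2 = Φ.σ m ≫ Φ.σ (m + 1) := by
  show (Φ.σUp m 1) ≫ Φ.σ (m + 1) = _
  show ((Φ.σUp m 0) ≫ Φ.σ m) ≫ _ = _
  show ((𝟙 _) ≫ Φ.σ m) ≫ _ = _
  rw [Category.id_comp]

lemma τUp_two (m : ℕ) : Φ.τUp m 2 = Φ.τ m ≫ Φ.τ (m + 1) := by
  show (Φ.τUp m 1) ≫ Φ.τ (m + 1) = _
  show ((Φ.τUp m 0) ≫ Φ.τ m) ≫ _ = _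
  show ((𝟙 _) ≫ Φ.τ m) ≫ _ = _
  rw [Category.id_comp]

lemma σUp_one (m : ℕ) : Φ.σUp m 1 = 𝟙 _ ≫ Φ.σ m := rfl
lemma τUp_one (m : ℕ) : Φ.τUp m 1 = 𝟙 _ ≫ Φ.τ m := rfl

/-- the `k`-level sources of the two legs of the `(k+1)`-sum agree. -/
lemma σUp2_ε (k : ℕ) :
    Φ.σUp k 2 ≫ GS.ε₁ (k + 1) 0 = Φ.σUp k 2 ≫ GS.ε₂ (k + 1) 0 := by
  have h := glue' (GS := GS) (k + 1) 0
  rw [σUp_one, τUp_one] at h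
  simp only [Category.id_comp] at h
  rw [σUp_two, Category.assoc, h, ← Category.assoc, Φ.relσ, Category.assoc]

lemma τUp2_ε (k : ℕ) :
    Φ.τUp k 2 ≫ GS.ε₁ (k + 1) 0 = Φ.τUp k 2 ≫ GS.ε₂ (k + 1) 0 := by
  have h := glue' (GS := GS) (k + 1) 0
  rw [σUp_one, τUp_one] at h
  simp only [Category.id_comp] at h
  calc (Φ.τUp k 2) ≫ GS.ε₁ (k + 1) 0
      = (Φ.τ k ≫ Φ.σ (k + 1)) ≫ GS.ε₁ (k + 1) 0 := by rw [τUp_two, Φ.relτ]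
    _ = Φ.τ k ≫ Φ.σ (k + 1) ≫ GS.ε₁ (k + 1) 0 := by rw [Category.assoc]
    _ = Φ.τ k ≫ Φ.τ (k + 1) ≫ GS.ε₂ (k + 1) 0 := by rw [h]
    _ = (Φ.τ k ≫ Φ.τ (k + 1)) ≫ GS.ε₂ (k + 1) 0 := by rw [Category.assoc]
    _ = _ := by rw [τUp_two]

/-! Lifting wrappers. -/

lemma lift_par (hC : GS.Contractible) {m i : ℕ} (T : GTable i) (hd : T.dim ≤ m + 2)
    (f g : Φ.D (m + 1) ⟶ GS.S T)
    (h1 : Φ.σ m ≫ f = Φ.σ m ≫ g) (h2 : Φ.τ m ≫ f = Φ.τ m ≫ g) :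
    ∃ H : Φ.D (m + 2) ⟶ GS.S T, Φ.σ (m + 1) ≫ H = f ∧ Φ.τ (m + 1) ≫ H = g :=
  hC (m + 1) T hd f g ⟨h1, h2⟩

lemma htp_pull (hC : GS.Contractible) {m i : ℕ} (T : GTable i) (hd : T.dim ≤ m + 2)
    (f g : Φ.D (m + 1) ⟶ GS.S T)
    (h1 : Φ.σ m ≫ f = Φ.σ m ≫ g) (h2 : Φ.τ m ≫ f = Φ.τ m ≫ g)
    (ξ : X.obj (op (GS.S T))) : Htp (m + 1) (pull (X := X) f ξ) (pull g ξ) := by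
  obtain ⟨H, hσ, hτ⟩ := lift_par hC T hd f g h1 h2
  exact ⟨pull H ξ, by rw [asrc_eq_pull, ← pull_comp, hσ], by rw [atgt_eq_pull, ← pull_comp, hτ]⟩

def toS (i : ℕ) (GS : GSums Φ) : Φ.D i ⟶ GS.S (GTable.single i) := GS.ι _

lemma toS_eqToHom (i : ℕ) : toS i GS ≫ eqToHom (GS.single_eq i) = 𝟙 _ := by
  rw [toS, GS.ι_single, eqToHom_trans, eqToHom_refl]

lemma lift_globe (hC : GS.Contractible) {m i : ℕ} (hi : i ≤ m + 2)
    (f g : Φ.D (m + 1) ⟶ Φ.D i)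
    (h1 : Φ.σ m ≫ f = Φ.σ m ≫ g) (h2 : Φ.τ m ≫ f = Φ.τ m ≫ g) :
    ∃ H : Φ.D (m + 2) ⟶ Φ.D i, Φ.σ (m + 1) ≫ H = f ∧ Φ.τ (m + 1) ≫ H = g := by
  obtain ⟨H, hσ, hτ⟩ := lift_par hC (GTable.single i) (by simpa [GTable.dim] using hi)
    (f ≫ toS i GS) (g ≫ toS i GS)
    (by rw [← Category.assoc, ← Category.assoc, h1]) (by rw [← Category.assoc, ← Category.assoc, h2])
  refine ⟨H ≫ eqToHom (GS.single_eq i), ?_, ?_⟩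
  · rw [← Category.assoc, hσ, Category.assoc, toS_eqToHom, Category.comp_id]
  · rw [← Category.assoc, hτ, Category.assoc, toS_eqToHom, Category.comp_id]

lemma htp_pull_globe (hC : GS.Contractible) {m i : ℕ} (hi : i ≤ m + 2)
    (f g : Φ.D (m + 1) ⟶ Φ.D i)
    (h1 : Φ.σ m ≫ f = Φ.σ m ≫ g) (h2 : Φ.τ m ≫ f = Φ.τ m ≫ g)
    (z : arr (Φ := Φ) X i) : Htp (m + 1) (pull f z) (pull g z) := by
  obtain ⟨H, hσ, hτ⟩ := lift_globe hC hi f g h1 h2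
  exact ⟨pull H z, by rw [asrc_eq_pull, ← pull_comp, hσ], by rw [atgt_eq_pull, ← pull_comp, hτ]⟩

/-! Endpoints and the homotopy calculus. -/

lemma pairUp_ε₁ (hm : GS.IsModel X) {j k : ℕ} (u v : arr (Φ := Φ) X (j + k + 1))
    (hc : Composable j k u v) :
    pull (GS.ε₁ j k) (pairUp hm u v hc) = u := pairUp_ι hm u v hc

lemma asrc_gunit (P : Pregroupoidal GS) {n : ℕ} (z : arr (Φ := Φ) X n) :
    asrc (gunit P z) = z := by
  rw [asrc_eq_pull, gunit_eq_pull, ← pull_comp, P.kappa_σ, pull_id]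

lemma atgt_gunit (P : Pregroupoidal GS) {n : ℕ} (z : arr (Φ := Φ) X n) :
    atgt (gunit P z) = z := by
  rw [atgt_eq_pull, gunit_eq_pull, ← pull_comp, P.kappa_τ, pull_id]

lemma htp_refl (P : Pregroupoidal GS) {n : ℕ} (z : arr (Φ := Φ) X n) : Htp n z z :=
  ⟨gunit P z, asrc_gunit P z, atgt_gunit P z⟩

lemma htp_of_eq (P : Pregroupoidal GS) {n : ℕ} {z z' : arr (Φ := Φ) X n} (h : z = z') :
    Htp n z z' := h ▸ htp_refl P z

lemma htp_symm (P : Pregroupoidal GS) {n : ℕ} {z z' : arr (Φ := Φ) X n}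
    (e : Htp n z z') : Htp n z' z := by
  obtain ⟨h, h1, h2⟩ := e
  exact ⟨gwinv P n 0 h, by rw [asrc_eq_pull, gwinv_eq_pull, ← pull_comp, P.winv_σ₀, ← atgt_eq_pull, h2],
    by rw [atgt_eq_pull, gwinv_eq_pull, ← pull_comp, P.winv_τ₀, ← asrc_eq_pull, h1]⟩

lemma asrc_gcomp0 (hm : GS.IsModel X) (P : Pregroupoidal GS) {j : ℕ}
    (u v : arr (Φ := Φ) X (j + 0 + 1)) (hc : Composable j 0 u v) :
    asrc (gcomp hm P j 0 u v) = asrc v := by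
  rw [gcomp_eq hm P _ _ hc, asrc_eq_pull, ← pull_comp, P.nabla_σ₀, pull_comp, pairUp_ε₂,
    ← asrc_eq_pull]

lemma atgt_gcomp0 (hm : GS.IsModel X) (P : Pregroupoidal GS) {j : ℕ}
    (u v : arr (Φ := Φ) X (j + 0 + 1)) (hc : Composable j 0 u v) :
    atgt (gcomp hm P j 0 u v) = atgt u := by
  rw [gcomp_eq hm P _ _ hc, atgt_eq_pull, ← pull_comp, P.nabla_τ₀, pull_comp, pairUp_ε₁,
    ← atgt_eq_pull]

lemma composable01 {j : ℕ} {a b : arr (Φ := Φ) X (j + 0 + 1)} :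
    Composable j 0 a b ↔ asrc a = atgt b := by
  show pull (Φ.σUp j 1) a = pull (Φ.τUp j 1) b ↔ _
  rw [σUp_one, τUp_one, pull_comp, pull_comp, pull_id, pull_id, ← asrc_eq_pull, ← atgt_eq_pull]

lemma htp_trans (hm : GS.IsModel X) (P : Pregroupoidal GS) {n : ℕ}
    {u v w : arr (Φ := Φ) X n} (e1 : Htp n u v) (e2 : Htp n v w) : Htp n u w := by
  obtain ⟨a, ha1, ha2⟩ := e1
  obtain ⟨b, hb1, hb2⟩ := e2
  have hc : Composable n 0 b a := composable01.2 (by rw [hb1, ha2])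
  exact ⟨gcomp hm P n 0 b a, by rw [asrc_gcomp0 hm P _ _ hc, ha1],
    by rw [atgt_gcomp0 hm P _ _ hc, hb2]⟩

lemma asrc_htp {n : ℕ} {z z' : arr (Φ := Φ) X (n + 1)} (e : Htp (n + 1) z z') :
    asrc z = asrc z' := by
  obtain ⟨h, h1, h2⟩ := e
  rw [← h1, ← h2, asrc_eq_pull (n := n), asrc_eq_pull (n := n), asrc_eq_pull (n := n + 1),
    atgt_eq_pull (n := n + 1), ← pull_comp, ← pull_comp, Φ.relσ]

lemma atgt_htp {n : ℕ} {z z' : arr (Φ := Φ) X (n + 1)} (e : Htp (n + 1) z z') :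
    atgt z = atgt z' := by
  obtain ⟨h, h1, h2⟩ := e
  rw [← h1, ← h2, atgt_eq_pull (n := n), atgt_eq_pull (n := n), asrc_eq_pull (n := n + 1),
    atgt_eq_pull (n := n + 1), ← pull_comp, ← pull_comp, Φ.relτ]

lemma htp_gwinv (P : Pregroupoidal GS) {j : ℕ} {z z' : arr (Φ := Φ) X (j + 0 + 1)}
    (e : Htp (j + 1) z z') : Htp (j + 1) (gwinv P j 0 z) (gwinv P j 0 z') := by
  obtain ⟨h, h1, h2⟩ := e
  have wσ := P.winv_σ j 0
  have wτ := P.winv_τ j 0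
  simp only [Nat.add_zero, Nat.zero_add] at wσ wτ
  refine ⟨pull (P.winv j 1) h, ?_, ?_⟩
  · rw [asrc_eq_pull, ← pull_comp, wσ, pull_comp, gwinv_eq_pull, ← asrc_eq_pull, h1]
  · rw [atgt_eq_pull, ← pull_comp, wτ, pull_comp, gwinv_eq_pull, ← atgt_eq_pull, h2]

/-- Congruence of codimension-one composition with respect to homotopy. -/
lemma htp_gcomp (hm : GS.IsModel X) (P : Pregroupoidal GS) {j : ℕ}
    {a b a' b' : arr (Φ := Φ) X (j + 0 + 1)}
    (hc : Composable j 0 a b) (hc' : Composable j 0 a' b')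
    (e1 : Htp (j + 1) a a') (e2 : Htp (j + 1) b b') :
    Htp (j + 1) (gcomp hm P j 0 a b) (gcomp hm P j 0 a' b') := by
  obtain ⟨H1, p1, q1⟩ := e1
  obtain ⟨H2, p2, q2⟩ := e2
  have hcH : Composable j 1 H1 H2 := by
    show pull (Φ.σUp j 2) H1 = pull (Φ.τUp j 2) H2
    rw [σUp_two, τUp_two, pull_comp, pull_comp, ← asrc_eq_pull (n := j + 1),
      ← atgt_eq_pull (n := j + 1), p1, q2, ← asrc_eq_pull, ← atgt_eq_pull]
    rw [composable01.1 hc]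
    exact atgt_htp ⟨H2, p2, q2⟩
  have keyσ : pull (GS.amalgσ j 0) (pairUp hm H1 H2 hcH) = pairUp hm (j := j) (k := 0) a b hc := by
    refine pairUp_unique hm hc _ ?_ ?_
    · rw [← pull_comp, ι_amalgσ, pull_comp, pairUp_ε₁, ← asrc_eq_pull, p1]
    · rw [← pull_comp, ε₂_amalgσ, pull_comp, pairUp_ε₂, ← asrc_eq_pull, p2]
  have keyτ : pull (GS.amalgτ j 0) (pairUp hm H1 H2 hcH) = pairUp hm (j := j) (k := 0) a' b' hc' := by
    refine pairUp_unique hm hc' _ ?_ ?_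
    · rw [← pull_comp, ι_amalgτ, pull_comp, pairUp_ε₁, ← atgt_eq_pull, q1]
    · rw [← pull_comp, ε₂_amalgτ, pull_comp, pairUp_ε₂, ← atgt_eq_pull, q2]
  have nσ := P.nabla_σ j 0
  have nτ := P.nabla_τ j 0
  simp only [Nat.add_zero, Nat.zero_add] at nσ nτ
  refine ⟨gcomp hm P j 1 H1 H2, ?_, ?_⟩
  · rw [gcomp_eq hm P _ _ hcH, asrc_eq_pull, ← pull_comp, nσ, pull_comp, keyσ,
      ← gcomp_eq hm P _ _ hc]
  · rw [gcomp_eq hm P _ _ hcH, atgt_eq_pull, ← pull_comp, nτ, pull_comp, keyτ,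
      ← gcomp_eq hm P _ _ hc']

/-! The κ-pads and collapse legs used in the Eckmann–Hilton argument. -/

section Scenes

variable (P : Pregroupoidal GS) (k : ℕ)

lemma kσa {Y : E} {n : ℕ} (f : Φ.D n ⟶ Y) : Φ.σ n ≫ P.kappa n ≫ f = f := by
  rw [← Category.assoc, P.kappa_σ, Category.id_comp]

lemma kτa {Y : E} {n : ℕ} (f : Φ.D n ⟶ Y) : Φ.τ n ≫ P.kappa n ≫ f = f := by
  rw [← Category.assoc, P.kappa_τ, Category.id_comp]

lemma σσ_eq : Φ.σ k ≫ Φ.σ (k + 1) = Φ.σUp k 2 := (σUp_two k).symm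
lemma στ_eq : Φ.σ k ≫ Φ.τ (k + 1) = Φ.σUp k 2 := by rw [← Φ.relσ, ← σUp_two]
lemma τσ_eq : Φ.τ k ≫ Φ.σ (k + 1) = Φ.τUp k 2 := by rw [Φ.relτ, ← τUp_two]
lemma ττ_eq : Φ.τ k ≫ Φ.τ (k + 1) = Φ.τUp k 2 := (τUp_two k).symm

def padσ1 : Φ.D (k + 1) ⟶ Φ.D (k + 2) := P.kappa k ≫ Φ.σUp k 2
def padτ1 : Φ.D (k + 1) ⟶ Φ.D (k + 2) := P.kappa k ≫ Φ.τUp k 2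
def padσ2 : Φ.D (k + 2) ⟶ Φ.D (k + 2) := P.kappa (k + 1) ≫ padσ1 P k
def padτ2 : Φ.D (k + 2) ⟶ Φ.D (k + 2) := P.kappa (k + 1) ≫ padτ1 P k

lemma σ_padσ1 : Φ.σ k ≫ padσ1 P k = Φ.σUp k 2 := kσa P _
lemma τ_padσ1 : Φ.τ k ≫ padσ1 P k = Φ.σUp k 2 := kτa P _
lemma σ_padτ1 : Φ.σ k ≫ padτ1 P k = Φ.τUp k 2 := kσa P _
lemma τ_padτ1 : Φ.τ k ≫ padτ1 P k = Φ.τUp k 2 := kτa P _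
lemma σ1_padσ2 : Φ.σ (k + 1) ≫ padσ2 P k = padσ1 P k := kσa P _
lemma τ1_padσ2 : Φ.τ (k + 1) ≫ padσ2 P k = padσ1 P k := kτa P _
lemma σ1_padτ2 : Φ.σ (k + 1) ≫ padτ2 P k = padτ1 P k := kσa P _
lemma τ1_padτ2 : Φ.τ (k + 1) ≫ padτ2 P k = padτ1 P k := kτa P _

lemma ysm_gl : Φ.σUp k 1 ≫ Φ.σ (k + 1) = Φ.τUp k 1 ≫ padσ1 P k := by
  rw [σUp_one, τUp_one]
  simp only [Category.id_comp]
  rw [τ_padσ1, σσ_eq]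

lemma ytm_gl : Φ.σUp k 1 ≫ Φ.τ (k + 1) = Φ.τUp k 1 ≫ padσ1 P k := by
  rw [σUp_one, τUp_one]
  simp only [Category.id_comp]
  rw [τ_padσ1, στ_eq]

lemma y'sm_gl : Φ.σUp k 1 ≫ padτ1 P k = Φ.τUp k 1 ≫ Φ.σ (k + 1) := by
  rw [σUp_one, τUp_one]
  simp only [Category.id_comp]
  rw [σ_padτ1, τσ_eq]

lemma y'tm_gl : Φ.σUp k 1 ≫ padτ1 P k = Φ.τUp k 1 ≫ Φ.τ (k + 1) := by
  rw [σUp_one, τUp_one]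
  simp only [Category.id_comp]
  rw [σ_padτ1, ττ_eq]

/-- `Yσ`: the composite of the `(k+1)`-source with a κ-pad, as a morphism. -/
def Yσm : Φ.D (k + 1) ⟶ Φ.D (k + 2) :=
  P.nabla k 0 ≫ bdm (j := k) (k := 0) GS (Φ.σ (k + 1)) (padσ1 P k) (ysm_gl P k)
def Yτm : Φ.D (k + 1) ⟶ Φ.D (k + 2) :=
  P.nabla k 0 ≫ bdm (j := k) (k := 0) GS (Φ.τ (k + 1)) (padσ1 P k) (ytm_gl P k)
def Y'σm : Φ.D (k + 1) ⟶ Φ.D (k + 2) :=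
  P.nabla k 0 ≫ bdm (j := k) (k := 0) GS (padτ1 P k) (Φ.σ (k + 1)) (y'sm_gl P k)
def Y'τm : Φ.D (k + 1) ⟶ Φ.D (k + 2) :=
  P.nabla k 0 ≫ bdm (j := k) (k := 0) GS (padτ1 P k) (Φ.τ (k + 1)) (y'tm_gl P k)

lemma σ_Yσm : Φ.σ k ≫ Yσm P k = Φ.σUp k 2 := by
  calc Φ.σ k ≫ Yσm P k = Φ.σ k ≫ padσ1 P k := σ_nbdm0 P _ _ _
    _ = _ := σ_padσ1 P k
lemma τ_Yσm : Φ.τ k ≫ Yσm P k = Φ.τ k ≫ Φ.σ (k + 1) := τ_nbdm0 P _ _ _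
lemma σ_Yτm : Φ.σ k ≫ Yτm P k = Φ.σUp k 2 := by
  calc Φ.σ k ≫ Yτm P k = Φ.σ k ≫ padσ1 P k := σ_nbdm0 P _ _ _
    _ = _ := σ_padσ1 P k
lemma τ_Yτm : Φ.τ k ≫ Yτm P k = Φ.τUp k 2 := by
  calc Φ.τ k ≫ Yτm P k = Φ.τ k ≫ Φ.τ (k + 1) := τ_nbdm0 P _ _ _
    _ = _ := ττ_eq k
lemma σ_Y'σm : Φ.σ k ≫ Y'σm P k = Φ.σUp k 2 := by
  calc Φ.σ k ≫ Y'σm P k = Φ.σ k ≫ Φ.σ (k + 1) := σ_nbdm0 P _ _ _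
    _ = _ := σσ_eq k
lemma τ_Y'σm : Φ.τ k ≫ Y'σm P k = Φ.τUp k 2 := by
  calc Φ.τ k ≫ Y'σm P k = Φ.τ k ≫ padτ1 P k := τ_nbdm0 P _ _ _
    _ = _ := τ_padτ1 P k
lemma σ_Y'τm : Φ.σ k ≫ Y'τm P k = Φ.σUp k 2 := by
  calc Φ.σ k ≫ Y'τm P k = Φ.σ k ≫ Φ.τ (k + 1) := σ_nbdm0 P _ _ _
    _ = _ := στ_eq k
lemma τ_Y'τm : Φ.τ k ≫ Y'τm P k = Φ.τUp k 2 := by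
  calc Φ.τ k ≫ Y'τm P k = Φ.τ k ≫ padτ1 P k := τ_nbdm0 P _ _ _
    _ = _ := τ_padτ1 P k

lemma pm_gl : Φ.σUp k 2 ≫ 𝟙 (Φ.D (k + 2)) = Φ.τUp k 2 ≫ padσ2 P k := by
  rw [Category.comp_id, τUp_two, Category.assoc, padσ2, kτa, τ_padσ1]

lemma qm_gl : Φ.σUp k 2 ≫ padτ2 P k = Φ.τUp k 2 ≫ 𝟙 (Φ.D (k + 2)) := by
  rw [Category.comp_id, σUp_two, Category.assoc, padτ2, kσa, σ_padτ1]

/-- the morphism computing `z ↦ z *₂ U`. -/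
def pm : Φ.D (k + 2) ⟶ Φ.D (k + 2) :=
  P.nabla k 1 ≫ bdm GS (𝟙 _) (padσ2 P k) (pm_gl P k)
/-- the morphism computing `z ↦ U *₂ z`. -/
def qm : Φ.D (k + 2) ⟶ Φ.D (k + 2) :=
  P.nabla k 1 ≫ bdm GS (padτ2 P k) (𝟙 _) (qm_gl P k)

lemma σ_pm : Φ.σ (k + 1) ≫ pm P k = Yσm P k := by
  calc Φ.σ (k + 1) ≫ pm P k
      = P.nabla k 0 ≫ bdm GS (Φ.σ (k + 1) ≫ 𝟙 _) (Φ.σ (k + 1) ≫ padσ2 P k)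
          (by rw [Category.comp_id, σ1_padσ2]; exact ysm_gl P k) :=
        σ_nbdm1 (j := k) (k := 0) P _ _ _ _
    _ = Yσm P k := by
        rw [Yσm]
        exact congrArg _ (bdm_congr _ _ (Category.comp_id _) (σ1_padσ2 P k))

lemma τ_pm : Φ.τ (k + 1) ≫ pm P k = Yτm P k := by
  calc Φ.τ (k + 1) ≫ pm P k
      = P.nabla k 0 ≫ bdm GS (Φ.τ (k + 1) ≫ 𝟙 _) (Φ.τ (k + 1) ≫ padσ2 P k)
          (by rw [Category.comp_id, τ1_padσ2]; exact ytm_gl P k) :=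
        τ_nbdm1 (j := k) (k := 0) P _ _ _ _
    _ = Yτm P k := by
        rw [Yτm]
        exact congrArg _ (bdm_congr _ _ (Category.comp_id _) (τ1_padσ2 P k))

lemma σ_qm : Φ.σ (k + 1) ≫ qm P k = Y'σm P k := by
  calc Φ.σ (k + 1) ≫ qm P k
      = P.nabla k 0 ≫ bdm GS (Φ.σ (k + 1) ≫ padτ2 P k) (Φ.σ (k + 1) ≫ 𝟙 _)
          (by rw [Category.comp_id, σ1_padτ2]; exact y'sm_gl P k) :=
        σ_nbdm1 (j := k) (k := 0) P _ _ _ _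
    _ = Y'σm P k := by
        rw [Y'σm]
        exact congrArg _ (bdm_congr _ _ (σ1_padτ2 P k) (Category.comp_id _))

lemma τ_qm : Φ.τ (k + 1) ≫ qm P k = Y'τm P k := by
  calc Φ.τ (k + 1) ≫ qm P k
      = P.nabla k 0 ≫ bdm GS (Φ.τ (k + 1) ≫ padτ2 P k) (Φ.τ (k + 1) ≫ 𝟙 _)
          (by rw [Category.comp_id, τ1_padτ2]; exact y'tm_gl P k) :=
        τ_nbdm1 (j := k) (k := 0) P _ _ _ _
    _ = Y'τm P k := by
        rw [Y'τm]
        exact congrArg _ (bdm_congr _ _ (τ1_padτ2 P k) (Category.comp_id _))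

end Scenes

section Lifts

variable (hC : GS.Contractible) (P : Pregroupoidal GS) (k : ℕ)

lemma dim_Btab (j k' : ℕ) : (GSums.Btab j k').dim = j + k' + 1 := by
  simp [GSums.Btab, GTable.dim]

/-- collapse cylinder from `Yσ` to `σ`. -/
noncomputable def Hσ : Φ.D (k + 2) ⟶ Φ.D (k + 2) :=
  (lift_globe hC (le_refl (k + 2)) (Yσm P k) (Φ.σ (k + 1))
    (by rw [σ_Yσm, σσ_eq]) (τ_Yσm P k)).choose

lemma Hσ_σ : Φ.σ (k + 1) ≫ Hσ hC P k = Yσm P k :=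
  (lift_globe hC (le_refl (k + 2)) (Yσm P k) (Φ.σ (k + 1))
    (by rw [σ_Yσm, σσ_eq]) (τ_Yσm P k)).choose_spec.1

lemma Hσ_τ : Φ.τ (k + 1) ≫ Hσ hC P k = Φ.σ (k + 1) :=
  (lift_globe hC (le_refl (k + 2)) (Yσm P k) (Φ.σ (k + 1))
    (by rw [σ_Yσm, σσ_eq]) (τ_Yσm P k)).choose_spec.2

/-- collapse cylinder from `Yτ` to `τ`. -/
noncomputable def Hτ : Φ.D (k + 2) ⟶ Φ.D (k + 2) :=
  (lift_globe hC (le_refl (k + 2)) (Yτm P k) (Φ.τ (k + 1))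
    (by rw [σ_Yτm, στ_eq]) (by rw [τ_Yτm, ττ_eq])).choose

lemma Hτ_σ : Φ.σ (k + 1) ≫ Hτ hC P k = Yτm P k :=
  (lift_globe hC (le_refl (k + 2)) (Yτm P k) (Φ.τ (k + 1))
    (by rw [σ_Yτm, στ_eq]) (by rw [τ_Yτm, ττ_eq])).choose_spec.1

lemma Hτ_τ : Φ.τ (k + 1) ≫ Hτ hC P k = Φ.τ (k + 1) :=
  (lift_globe hC (le_refl (k + 2)) (Yτm P k) (Φ.τ (k + 1))
    (by rw [σ_Yτm, στ_eq]) (by rw [τ_Yτm, ττ_eq])).choose_spec.2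

/-- cylinder joining the `q`-padding to the `p`-padding (target side). -/
noncomputable def H3 : Φ.D (k + 2) ⟶ Φ.D (k + 2) :=
  (lift_globe hC (le_refl (k + 2)) (Y'τm P k) (Yτm P k)
    (by rw [σ_Y'τm, σ_Yτm]) (by rw [τ_Y'τm, τ_Yτm])).choose

lemma H3_σ : Φ.σ (k + 1) ≫ H3 hC P k = Y'τm P k :=
  (lift_globe hC (le_refl (k + 2)) (Y'τm P k) (Yτm P k)
    (by rw [σ_Y'τm, σ_Yτm]) (by rw [τ_Y'τm, τ_Yτm])).choose_spec.1

lemma H3_τ : Φ.τ (k + 1) ≫ H3 hC P k = Yτm P k :=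
  (lift_globe hC (le_refl (k + 2)) (Y'τm P k) (Yτm P k)
    (by rw [σ_Y'τm, σ_Yτm]) (by rw [τ_Y'τm, τ_Yτm])).choose_spec.2

/-- cylinder joining the `q`-padding to the `p`-padding (source side). -/
noncomputable def H4 : Φ.D (k + 2) ⟶ Φ.D (k + 2) :=
  (lift_globe hC (le_refl (k + 2)) (Y'σm P k) (Yσm P k)
    (by rw [σ_Y'σm, σ_Yσm]) (by rw [τ_Y'σm, τ_Yσm, τσ_eq])).choose

lemma H4_σ : Φ.σ (k + 1) ≫ H4 hC P k = Y'σm P k :=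
  (lift_globe hC (le_refl (k + 2)) (Y'σm P k) (Yσm P k)
    (by rw [σ_Y'σm, σ_Yσm]) (by rw [τ_Y'σm, τ_Yσm, τσ_eq])).choose_spec.1

lemma H4_τ : Φ.τ (k + 1) ≫ H4 hC P k = Yσm P k :=
  (lift_globe hC (le_refl (k + 2)) (Y'σm P k) (Yσm P k)
    (by rw [σ_Y'σm, σ_Yσm]) (by rw [τ_Y'σm, τ_Yσm, τσ_eq])).choose_spec.2

/-- the interchange cylinder inside the codimension-one sum. -/
noncomputable def Hc : Φ.D (k + 2) ⟶ GS.S (GSums.Btab (k + 1) 0) :=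
  (lift_par hC (GSums.Btab (k + 1) 0) (by rw [dim_Btab])
    (Yτm P k ≫ GS.ε₂ (k + 1) 0) (Yσm P k ≫ GS.ε₁ (k + 1) 0)
    (by rw [← Category.assoc, ← Category.assoc, σ_Yτm, σ_Yσm]; exact (σUp2_ε k).symm)
    (by rw [← Category.assoc, ← Category.assoc, τ_Yτm, τ_Yσm, τσ_eq];
        exact (τUp2_ε k).symm)).choose

lemma Hc_σ : Φ.σ (k + 1) ≫ Hc hC P k = Yτm P k ≫ GS.ε₂ (k + 1) 0 :=
  (lift_par hC (GSums.Btab (k + 1) 0) (by rw [dim_Btab])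
    (Yτm P k ≫ GS.ε₂ (k + 1) 0) (Yσm P k ≫ GS.ε₁ (k + 1) 0)
    (by rw [← Category.assoc, ← Category.assoc, σ_Yτm, σ_Yσm]; exact (σUp2_ε k).symm)
    (by rw [← Category.assoc, ← Category.assoc, τ_Yτm, τ_Yσm, τσ_eq];
        exact (τUp2_ε k).symm)).choose_spec.1

lemma Hc_τ : Φ.τ (k + 1) ≫ Hc hC P k = Yσm P k ≫ GS.ε₁ (k + 1) 0 :=
  (lift_par hC (GSums.Btab (k + 1) 0) (by rw [dim_Btab])
    (Yτm P k ≫ GS.ε₂ (k + 1) 0) (Yσm P k ≫ GS.ε₁ (k + 1) 0)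
    (by rw [← Category.assoc, ← Category.assoc, σ_Yτm, σ_Yσm]; exact (σUp2_ε k).symm)
    (by rw [← Category.assoc, ← Category.assoc, τ_Yτm, τ_Yσm, τσ_eq];
        exact (τUp2_ε k).symm)).choose_spec.2

end Lifts

section Elements

variable (hm : GS.IsModel X) (P : Pregroupoidal GS) (k : ℕ) (x : arr (Φ := Φ) X 0)

lemma pull_σ_unit (n : ℕ) :
    pull (Φ.σ n) (unitIter P (n + 1) x) = unitIter P n x := by
  rw [unitIter_eq_pull, ← pull_comp]
  show pull (Φ.σ n ≫ P.kappa n ≫ kDown P n) x = _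
  rw [kσa]
  rfl

lemma pull_τ_unit (n : ℕ) :
    pull (Φ.τ n) (unitIter P (n + 1) x) = unitIter P n x := by
  rw [unitIter_eq_pull, ← pull_comp]
  show pull (Φ.τ n ≫ P.kappa n ≫ kDown P n) x = _
  rw [kτa]
  rfl

lemma gunit_unit (n : ℕ) :
    gunit P (unitIter P n x) = unitIter P (n + 1) x := by
  rw [gunit_eq_pull, unitIter_eq_pull, ← pull_comp]
  rfl

variable {z : arr (Φ := Φ) X (k + 2)}

lemma pull_σUp2_z (hz1 : asrc z = unitIter P (k + 1) x) :
    pull (Φ.σUp k 2) z = unitIter P k x := by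
  rw [σUp_two, pull_comp]
  rw [← asrc_eq_pull (n := k + 1), hz1, pull_σ_unit]

lemma pull_τUp2_z (hz2 : atgt z = unitIter P (k + 1) x) :
    pull (Φ.τUp k 2) z = unitIter P k x := by
  rw [τUp_two, pull_comp]
  rw [← atgt_eq_pull (n := k + 1), hz2, pull_τ_unit]

lemma pull_padσ1_z (hz1 : asrc z = unitIter P (k + 1) x) :
    pull (padσ1 P k) z = unitIter P (k + 1) x := by
  rw [padσ1, pull_comp, pull_σUp2_z P k x hz1, unitIter_eq_pull, ← pull_comp]
  rfl

lemma pull_padτ1_z (hz2 : atgt z = unitIter P (k + 1) x) :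
    pull (padτ1 P k) z = unitIter P (k + 1) x := by
  rw [padτ1, pull_comp, pull_τUp2_z P k x hz2, unitIter_eq_pull, ← pull_comp]
  rfl

lemma pull_padσ2_z (hz1 : asrc z = unitIter P (k + 1) x) :
    pull (padσ2 P k) z = unitIter P (k + 2) x := by
  rw [padσ2, pull_comp, pull_padσ1_z P k x hz1, unitIter_eq_pull, ← pull_comp]
  rfl

lemma pull_padτ2_z (hz2 : atgt z = unitIter P (k + 1) x) :
    pull (padτ2 P k) z = unitIter P (k + 2) x := by
  rw [padτ2, pull_comp, pull_padτ1_z P k x hz2, unitIter_eq_pull, ← pull_comp]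
  rfl

lemma pull_pm_z (hz1 : asrc z = unitIter P (k + 1) x) :
    pull (pm P k) z = gcomp hm P k 1 z (unitIter P (k + 2) x) := by
  have h := pull_nabla_bdm (j := k) (k := 1) hm P (𝟙 (Φ.D (k + 2))) (padσ2 P k) (pm_gl P k) z
  rw [pull_id, pull_padσ2_z P k x hz1] at h
  exact h

lemma pull_qm_z (hz2 : atgt z = unitIter P (k + 1) x) :
    pull (qm P k) z = gcomp hm P k 1 (unitIter P (k + 2) x) z := by
  have h := pull_nabla_bdm (j := k) (k := 1) hm P (padτ2 P k) (𝟙 (Φ.D (k + 2))) (qm_gl P k) z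
  rw [pull_id, pull_padτ2_z P k x hz2] at h
  exact h

lemma pull_Yσm_z (hz1 : asrc z = unitIter P (k + 1) x) :
    pull (Yσm P k) z = gcomp hm P k 0 (unitIter P (k + 1) x) (unitIter P (k + 1) x) := by
  have h := pull_nabla_bdm (j := k) (k := 0) hm P (Φ.σ (k + 1)) (padσ1 P k) (ysm_gl P k) z
  rw [← asrc_eq_pull (n := k + 1), hz1, pull_padσ1_z P k x hz1] at h
  exact h

lemma pull_Yτm_z (hz1 : asrc z = unitIter P (k + 1) x)
    (hz2 : atgt z = unitIter P (k + 1) x) :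
    pull (Yτm P k) z = gcomp hm P k 0 (unitIter P (k + 1) x) (unitIter P (k + 1) x) := by
  have h := pull_nabla_bdm (j := k) (k := 0) hm P (Φ.τ (k + 1)) (padσ1 P k) (ytm_gl P k) z
  rw [← atgt_eq_pull (n := k + 1), hz2, pull_padσ1_z P k x hz1] at h
  exact h

lemma pull_Y'σm_z (hz1 : asrc z = unitIter P (k + 1) x)
    (hz2 : atgt z = unitIter P (k + 1) x) :
    pull (Y'σm P k) z = gcomp hm P k 0 (unitIter P (k + 1) x) (unitIter P (k + 1) x) := by
  have h := pull_nabla_bdm (j := k) (k := 0) hm P (padτ1 P k) (Φ.σ (k + 1)) (y'sm_gl P k) z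
  rw [← asrc_eq_pull (n := k + 1), hz1, pull_padτ1_z P k x hz2] at h
  exact h

lemma pull_Y'τm_z (hz2 : atgt z = unitIter P (k + 1) x) :
    pull (Y'τm P k) z = gcomp hm P k 0 (unitIter P (k + 1) x) (unitIter P (k + 1) x) := by
  have h := pull_nabla_bdm (j := k) (k := 0) hm P (padτ1 P k) (Φ.τ (k + 1)) (y'tm_gl P k) z
  rw [← atgt_eq_pull (n := k + 1), hz2, pull_padτ1_z P k x hz2] at h
  exact h

end Elements

section BasicScenes

/-- `bdm` against a codimension-one sum, with ordinary boundary hypotheses. -/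
def bdm0 {j : ℕ} {Y : E} (GS : GSums Φ) (f g : Φ.D (j + 1) ⟶ Y)
    (hgl : Φ.σ j ≫ f = Φ.τ j ≫ g) : GS.S (GSums.Btab j 0) ⟶ Y :=
  bdm GS f g (by
    show Φ.σUp j 1 ≫ f = Φ.τUp j 1 ≫ g
    rw [σUp_one, τUp_one]
    simpa using hgl)

lemma pull_nabla_bdm0 (hm : GS.IsModel X) (P : Pregroupoidal GS) {j : ℕ} {Y : E}
    (f g : Φ.D (j + 1) ⟶ Y) (hgl : Φ.σ j ≫ f = Φ.τ j ≫ g) (ξ : X.obj (op Y)) :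
    pull (P.nabla j 0 ≫ bdm0 GS f g hgl) ξ = gcomp hm P j 0 (pull f ξ) (pull g ξ) :=
  pull_nabla_bdm (j := j) (k := 0) hm P f g _ ξ

lemma ι_bdm0 {j : ℕ} {Y : E} (f g : Φ.D (j + 1) ⟶ Y) (hgl) :
    GS.ι (GSums.Btab j 0) ≫ bdm0 GS f g hgl = f := ι_bdm _ _ _

lemma ε₂_bdm0 {j : ℕ} {Y : E} (f g : Φ.D (j + 1) ⟶ Y) (hgl) :
    GS.ε₂ j 0 ≫ bdm0 GS f g hgl = g := ε₂_bdm _ _ _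

lemma σ_nbdm00 (P : Pregroupoidal GS) {j : ℕ} {Y : E} (f g : Φ.D (j + 1) ⟶ Y) (hgl) :
    Φ.σ j ≫ (P.nabla j 0 ≫ bdm0 GS f g hgl) = Φ.σ j ≫ g :=
  σ_nbdm0 (j := j) P f g _

lemma τ_nbdm00 (P : Pregroupoidal GS) {j : ℕ} {Y : E} (f g : Φ.D (j + 1) ⟶ Y) (hgl) :
    Φ.τ j ≫ (P.nabla j 0 ≫ bdm0 GS f g hgl) = Φ.τ j ≫ f :=
  τ_nbdm0 (j := j) P f g _

variable (hC : GS.Contractible) (hm : GS.IsModel X) (P : Pregroupoidal GS) (k : ℕ)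

lemma winvσa {Y : E} (f : Φ.D (k + 2) ⟶ Y) :
    Φ.σ (k + 1) ≫ P.winv (k + 1) 0 ≫ f = Φ.τ (k + 1) ≫ f := by
  rw [← Category.assoc]
  exact congrArg (· ≫ f) (P.winv_σ₀ (k + 1))

lemma winvτa {Y : E} (f : Φ.D (k + 2) ⟶ Y) :
    Φ.τ (k + 1) ≫ P.winv (k + 1) 0 ≫ f = Φ.σ (k + 1) ≫ f := by
  rw [← Category.assoc]
  exact congrArg (· ≫ f) (P.winv_τ₀ (k + 1))

lemma unitR_gl : Φ.σ (k + 1) ≫ 𝟙 (Φ.D (k + 2))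
    = Φ.τ (k + 1) ≫ (P.kappa (k + 1) ≫ Φ.σ (k + 1)) := by
  rw [Category.comp_id, kτa]

lemma unitL_gl : Φ.σ (k + 1) ≫ (P.kappa (k + 1) ≫ Φ.τ (k + 1))
    = Φ.τ (k + 1) ≫ 𝟙 (Φ.D (k + 2)) := by
  rw [Category.comp_id, kσa]

lemma invL_gl : Φ.σ (k + 1) ≫ P.winv (k + 1) 0 = Φ.τ (k + 1) ≫ 𝟙 (Φ.D (k + 2)) := by
  rw [Category.comp_id]
  exact P.winv_σ₀ (k + 1)

lemma invR_gl : Φ.σ (k + 1) ≫ 𝟙 (Φ.D (k + 2)) = Φ.τ (k + 1) ≫ P.winv (k + 1) 0 := by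
  rw [Category.comp_id]
  exact (P.winv_τ₀ (k + 1)).symm

include hC

lemma htp_unit_right (z : arr (Φ := Φ) X (k + 2)) :
    Htp (k + 2) (gcomp hm P (k + 1) 0 z (gunit P (asrc z))) z := by
  have hv := pull_nabla_bdm0 (j := k + 1) hm P (𝟙 _) (P.kappa (k + 1) ≫ Φ.σ (k + 1))
    (unitR_gl P k) z
  have e2 : pull (P.kappa (k + 1) ≫ Φ.σ (k + 1)) z = gunit P (asrc z) := by
    rw [pull_comp]; rfl
  rw [pull_id, e2] at hv
  have par1 : Φ.σ (k + 1) ≫ (P.nabla (k + 1) 0 ≫ bdm0 GS (𝟙 _)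
      (P.kappa (k + 1) ≫ Φ.σ (k + 1)) (unitR_gl P k)) = Φ.σ (k + 1) ≫ 𝟙 _ := by
    rw [Category.comp_id]
    calc _ = Φ.σ (k + 1) ≫ P.kappa (k + 1) ≫ Φ.σ (k + 1) := σ_nbdm00 P _ _ _
      _ = _ := kσa P _
  have par2 : Φ.τ (k + 1) ≫ (P.nabla (k + 1) 0 ≫ bdm0 GS (𝟙 _)
      (P.kappa (k + 1) ≫ Φ.σ (k + 1)) (unitR_gl P k)) = Φ.τ (k + 1) ≫ 𝟙 _ :=
    τ_nbdm00 P _ _ _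
  have h := htp_pull_globe (m := k + 1) (i := k + 2) hC (by omega) _ _ par1 par2 z
  rw [pull_id, hv] at h
  exact h

lemma htp_unit_left (z : arr (Φ := Φ) X (k + 2)) :
    Htp (k + 2) (gcomp hm P (k + 1) 0 (gunit P (atgt z)) z) z := by
  have hv := pull_nabla_bdm0 (j := k + 1) hm P (P.kappa (k + 1) ≫ Φ.τ (k + 1)) (𝟙 _)
    (unitL_gl P k) z
  have e2 : pull (P.kappa (k + 1) ≫ Φ.τ (k + 1)) z = gunit P (atgt z) := by
    rw [pull_comp]; rfl
  rw [pull_id, e2] at hv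
  have par1 : Φ.σ (k + 1) ≫ (P.nabla (k + 1) 0 ≫ bdm0 GS
      (P.kappa (k + 1) ≫ Φ.τ (k + 1)) (𝟙 _) (unitL_gl P k)) = Φ.σ (k + 1) ≫ 𝟙 _ :=
    σ_nbdm00 P _ _ _
  have par2 : Φ.τ (k + 1) ≫ (P.nabla (k + 1) 0 ≫ bdm0 GS
      (P.kappa (k + 1) ≫ Φ.τ (k + 1)) (𝟙 _) (unitL_gl P k)) = Φ.τ (k + 1) ≫ 𝟙 _ := by
    rw [Category.comp_id]
    calc _ = Φ.τ (k + 1) ≫ P.kappa (k + 1) ≫ Φ.τ (k + 1) := τ_nbdm00 P _ _ _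
      _ = _ := kτa P _
  have h := htp_pull_globe (m := k + 1) (i := k + 2) hC (by omega) _ _ par1 par2 z
  rw [pull_id, hv] at h
  exact h

lemma htp_inv_left (z : arr (Φ := Φ) X (k + 2)) :
    Htp (k + 2) (gcomp hm P (k + 1) 0 (gwinv P (k + 1) 0 z) z) (gunit P (asrc z)) := by
  have hv := pull_nabla_bdm0 (j := k + 1) hm P (P.winv (k + 1) 0) (𝟙 _) (invL_gl P k) z
  have e2 : pull (P.winv (k + 1) 0) z = gwinv P (k + 1) 0 z := rfl
  rw [pull_id, e2] at hv
  have par1 : Φ.σ (k + 1) ≫ (P.nabla (k + 1) 0 ≫ bdm0 GS (P.winv (k + 1) 0) (𝟙 _)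
      (invL_gl P k)) = Φ.σ (k + 1) ≫ (P.kappa (k + 1) ≫ Φ.σ (k + 1)) := by
    rw [kσa]
    calc _ = Φ.σ (k + 1) ≫ 𝟙 _ := σ_nbdm00 P _ _ _
      _ = _ := Category.comp_id _
  have par2 : Φ.τ (k + 1) ≫ (P.nabla (k + 1) 0 ≫ bdm0 GS (P.winv (k + 1) 0) (𝟙 _)
      (invL_gl P k)) = Φ.τ (k + 1) ≫ (P.kappa (k + 1) ≫ Φ.σ (k + 1)) := by
    rw [kτa]
    calc _ = Φ.τ (k + 1) ≫ P.winv (k + 1) 0 := τ_nbdm00 P _ _ _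
      _ = _ := P.winv_τ₀ (k + 1)
  have h := htp_pull_globe (m := k + 1) (i := k + 2) hC (by omega) _ _ par1 par2 z
  have e3 : pull (P.kappa (k + 1) ≫ Φ.σ (k + 1)) z = gunit P (asrc z) := by
    rw [pull_comp]; rfl
  rw [e3, hv] at h
  exact h

lemma htp_inv_right (z : arr (Φ := Φ) X (k + 2)) :
    Htp (k + 2) (gcomp hm P (k + 1) 0 z (gwinv P (k + 1) 0 z)) (gunit P (atgt z)) := by
  have hv := pull_nabla_bdm0 (j := k + 1) hm P (𝟙 _) (P.winv (k + 1) 0) (invR_gl P k) z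
  have e2 : pull (P.winv (k + 1) 0) z = gwinv P (k + 1) 0 z := rfl
  rw [pull_id, e2] at hv
  have par1 : Φ.σ (k + 1) ≫ (P.nabla (k + 1) 0 ≫ bdm0 GS (𝟙 _) (P.winv (k + 1) 0)
      (invR_gl P k)) = Φ.σ (k + 1) ≫ (P.kappa (k + 1) ≫ Φ.τ (k + 1)) := by
    rw [kσa]
    calc _ = Φ.σ (k + 1) ≫ P.winv (k + 1) 0 := σ_nbdm00 P _ _ _
      _ = _ := P.winv_σ₀ (k + 1)
  have par2 : Φ.τ (k + 1) ≫ (P.nabla (k + 1) 0 ≫ bdm0 GS (𝟙 _) (P.winv (k + 1) 0)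
      (invR_gl P k)) = Φ.τ (k + 1) ≫ (P.kappa (k + 1) ≫ Φ.τ (k + 1)) := by
    rw [kτa]
    calc _ = Φ.τ (k + 1) ≫ 𝟙 _ := τ_nbdm00 P _ _ _
      _ = _ := Category.comp_id _
  have h := htp_pull_globe (m := k + 1) (i := k + 2) hC (by omega) _ _ par1 par2 z
  have e3 : pull (P.kappa (k + 1) ≫ Φ.τ (k + 1)) z = gunit P (atgt z) := by
    rw [pull_comp]; rfl
  rw [e3, hv] at h
  exact h

/-- Scene (S1): every cell is, up to homotopy, the conjugate of its `p`-padding. -/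
lemma scene_V1 (z : arr (Φ := Φ) X (k + 2)) :
    Htp (k + 2)
      (gcomp hm P (k + 1) 0
        (gcomp hm P (k + 1) 0 (pull (Hτ hC P k) z) (pull (pm P k) z))
        (gwinv P (k + 1) 0 (pull (Hσ hC P k) z))) z := by
  have gl1 : Φ.σ (k + 1) ≫ Hτ hC P k = Φ.τ (k + 1) ≫ pm P k := by
    rw [Hτ_σ, τ_pm]
  have gl2 : Φ.σ (k + 1) ≫ (P.nabla (k + 1) 0 ≫ bdm0 GS (Hτ hC P k) (pm P k) gl1)
      = Φ.τ (k + 1) ≫ (P.winv (k + 1) 0 ≫ Hσ hC P k) := by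
    rw [winvτa, Hσ_σ]
    calc _ = Φ.σ (k + 1) ≫ pm P k := σ_nbdm00 P _ _ _
      _ = _ := σ_pm P k
  have hv1 := pull_nabla_bdm0 (j := k + 1) hm P (Hτ hC P k) (pm P k) gl1 z
  have hv2 := pull_nabla_bdm0 (j := k + 1) hm P
    (P.nabla (k + 1) 0 ≫ bdm0 GS (Hτ hC P k) (pm P k) gl1)
    (P.winv (k + 1) 0 ≫ Hσ hC P k) gl2 z
  have e3 : pull (P.winv (k + 1) 0 ≫ Hσ hC P k) z
      = gwinv P (k + 1) 0 (pull (Hσ hC P k) z) := by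
    rw [pull_comp]; rfl
  rw [hv1, e3] at hv2
  have par1 : Φ.σ (k + 1) ≫ (P.nabla (k + 1) 0 ≫ bdm0 GS
      (P.nabla (k + 1) 0 ≫ bdm0 GS (Hτ hC P k) (pm P k) gl1)
      (P.winv (k + 1) 0 ≫ Hσ hC P k) gl2) = Φ.σ (k + 1) ≫ 𝟙 _ := by
    rw [Category.comp_id]
    calc _ = Φ.σ (k + 1) ≫ (P.winv (k + 1) 0 ≫ Hσ hC P k) := σ_nbdm00 P _ _ _
      _ = Φ.τ (k + 1) ≫ Hσ hC P k := winvσa P k _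
      _ = _ := Hσ_τ hC P k
  have par2 : Φ.τ (k + 1) ≫ (P.nabla (k + 1) 0 ≫ bdm0 GS
      (P.nabla (k + 1) 0 ≫ bdm0 GS (Hτ hC P k) (pm P k) gl1)
      (P.winv (k + 1) 0 ≫ Hσ hC P k) gl2) = Φ.τ (k + 1) ≫ 𝟙 _ := by
    rw [Category.comp_id]
    calc _ = Φ.τ (k + 1) ≫ (P.nabla (k + 1) 0 ≫ bdm0 GS (Hτ hC P k) (pm P k) gl1) :=
          τ_nbdm00 P _ _ _
      _ = Φ.τ (k + 1) ≫ Hτ hC P k := τ_nbdm00 P _ _ _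
      _ = _ := Hτ_τ hC P k
  have h := htp_pull_globe (m := k + 1) (i := k + 2) hC (by omega) _ _ par1 par2 z
  rw [pull_id, hv2] at h
  exact h

/-- Scene (S2): the `p`-padding is homotopic to a conjugate of the `q`-padding. -/
lemma scene_PQ (z : arr (Φ := Φ) X (k + 2)) :
    Htp (k + 2)
      (gcomp hm P (k + 1) 0
        (gcomp hm P (k + 1) 0 (pull (H3 hC P k) z) (pull (qm P k) z))
        (gwinv P (k + 1) 0 (pull (H4 hC P k) z)))
      (pull (pm P k) z) := by
  have gl1 : Φ.σ (k + 1) ≫ H3 hC P k = Φ.τ (k + 1) ≫ qm P k := by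
    rw [H3_σ, τ_qm]
  have gl2 : Φ.σ (k + 1) ≫ (P.nabla (k + 1) 0 ≫ bdm0 GS (H3 hC P k) (qm P k) gl1)
      = Φ.τ (k + 1) ≫ (P.winv (k + 1) 0 ≫ H4 hC P k) := by
    rw [winvτa, H4_σ]
    calc _ = Φ.σ (k + 1) ≫ qm P k := σ_nbdm00 P _ _ _
      _ = _ := σ_qm P k
  have hv1 := pull_nabla_bdm0 (j := k + 1) hm P (H3 hC P k) (qm P k) gl1 z
  have hv2 := pull_nabla_bdm0 (j := k + 1) hm P
    (P.nabla (k + 1) 0 ≫ bdm0 GS (H3 hC P k) (qm P k) gl1)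
    (P.winv (k + 1) 0 ≫ H4 hC P k) gl2 z
  have e3 : pull (P.winv (k + 1) 0 ≫ H4 hC P k) z
      = gwinv P (k + 1) 0 (pull (H4 hC P k) z) := by
    rw [pull_comp]; rfl
  rw [hv1, e3] at hv2
  have par1 : Φ.σ (k + 1) ≫ (P.nabla (k + 1) 0 ≫ bdm0 GS
      (P.nabla (k + 1) 0 ≫ bdm0 GS (H3 hC P k) (qm P k) gl1)
      (P.winv (k + 1) 0 ≫ H4 hC P k) gl2) = Φ.σ (k + 1) ≫ pm P k := by
    rw [σ_pm]
    calc _ = Φ.σ (k + 1) ≫ (P.winv (k + 1) 0 ≫ H4 hC P k) := σ_nbdm00 P _ _ _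
      _ = Φ.τ (k + 1) ≫ H4 hC P k := winvσa P k _
      _ = _ := H4_τ hC P k
  have par2 : Φ.τ (k + 1) ≫ (P.nabla (k + 1) 0 ≫ bdm0 GS
      (P.nabla (k + 1) 0 ≫ bdm0 GS (H3 hC P k) (qm P k) gl1)
      (P.winv (k + 1) 0 ≫ H4 hC P k) gl2) = Φ.τ (k + 1) ≫ pm P k := by
    rw [τ_pm]
    calc _ = Φ.τ (k + 1) ≫ (P.nabla (k + 1) 0 ≫ bdm0 GS (H3 hC P k) (qm P k) gl1) :=
          τ_nbdm00 P _ _ _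
      _ = Φ.τ (k + 1) ≫ H3 hC P k := τ_nbdm00 P _ _ _
      _ = _ := H3_τ hC P k
  have h := htp_pull_globe (m := k + 1) (i := k + 2) hC (by omega) _ _ par1 par2 z
  rw [hv2] at h
  exact h

end BasicScenes

section CruxScene

variable (P : Pregroupoidal GS) (k : ℕ)

lemma σUp2_k {Y : E} (f : Φ.D (k + 1) ⟶ Y) :
    Φ.σUp k 2 ≫ (P.kappa (k + 1) ≫ f) = Φ.σ k ≫ f := by
  rw [σUp_two, Category.assoc, kσa]

lemma τUp2_k {Y : E} (f : Φ.D (k + 1) ⟶ Y) :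
    Φ.τUp k 2 ≫ (P.kappa (k + 1) ≫ f) = Φ.τ k ≫ f := by
  rw [τUp_two, Category.assoc, kτa]

def padA : Φ.D (k + 2) ⟶ GS.S (GSums.Btab k 1) :=
  P.kappa (k + 1) ≫ Φ.τ (k + 1) ≫ GS.ε₂ k 1
def padB : Φ.D (k + 2) ⟶ GS.S (GSums.Btab k 1) :=
  P.kappa (k + 1) ≫ Φ.σ (k + 1) ≫ GS.ε₁ k 1
def padC : Φ.D (k + 2) ⟶ GS.S (GSums.Btab k 1) :=
  P.kappa (k + 1) ≫ Φ.τ (k + 1) ≫ GS.ε₁ k 1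
def padD : Φ.D (k + 2) ⟶ GS.S (GSums.Btab k 1) :=
  P.kappa (k + 1) ≫ Φ.σ (k + 1) ≫ GS.ε₂ k 1

lemma glcA : Φ.σUp k 1 ≫ (Φ.σ (k + 1) ≫ GS.ε₁ k 1)
    = Φ.τUp k 1 ≫ (Φ.τ (k + 1) ≫ GS.ε₂ k 1) := by
  rw [σUp_one, τUp_one]
  simp only [Category.id_comp, ← Category.assoc]
  rw [σσ_eq, ττ_eq]
  exact glue' k 1

lemma glcB : Φ.σUp k 1 ≫ (Φ.τ (k + 1) ≫ GS.ε₁ k 1)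
    = Φ.τUp k 1 ≫ (Φ.τ (k + 1) ≫ GS.ε₂ k 1) := by
  rw [σUp_one, τUp_one]
  simp only [Category.id_comp, ← Category.assoc]
  rw [στ_eq, ττ_eq]
  exact glue' k 1

lemma glcC : Φ.σUp k 1 ≫ (Φ.σ (k + 1) ≫ GS.ε₁ k 1)
    = Φ.τUp k 1 ≫ (Φ.σ (k + 1) ≫ GS.ε₂ k 1) := by
  rw [σUp_one, τUp_one]
  simp only [Category.id_comp, ← Category.assoc]
  rw [σσ_eq, τσ_eq]
  exact glue' k 1

lemma glcD : Φ.σUp k 1 ≫ (Φ.τ (k + 1) ≫ GS.ε₁ k 1)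
    = Φ.τUp k 1 ≫ (Φ.σ (k + 1) ≫ GS.ε₂ k 1) := by
  rw [σUp_one, τUp_one]
  simp only [Category.id_comp, ← Category.assoc]
  rw [στ_eq, τσ_eq]
  exact glue' k 1

def sideA : GS.S (GSums.Btab k 0) ⟶ GS.S (GSums.Btab k 1) :=
  bdm GS (Φ.σ (k + 1) ≫ GS.ε₁ k 1) (Φ.τ (k + 1) ≫ GS.ε₂ k 1) (glcA k)
def sideB : GS.S (GSums.Btab k 0) ⟶ GS.S (GSums.Btab k 1) :=
  bdm GS (Φ.τ (k + 1) ≫ GS.ε₁ k 1) (Φ.τ (k + 1) ≫ GS.ε₂ k 1) (glcB k)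
def sideC : GS.S (GSums.Btab k 0) ⟶ GS.S (GSums.Btab k 1) :=
  bdm GS (Φ.σ (k + 1) ≫ GS.ε₁ k 1) (Φ.σ (k + 1) ≫ GS.ε₂ k 1) (glcC k)
def sideD : GS.S (GSums.Btab k 0) ⟶ GS.S (GSums.Btab k 1) :=
  bdm GS (Φ.τ (k + 1) ≫ GS.ε₁ k 1) (Φ.σ (k + 1) ≫ GS.ε₂ k 1) (glcD k)

lemma p1_gl : Φ.σUp k 2 ≫ GS.ε₁ k 1 = Φ.τUp k 2 ≫ padA P k := by
  calc Φ.σUp k 2 ≫ GS.ε₁ k 1 = Φ.τUp k 2 ≫ GS.ε₂ k 1 := glue' k 1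
    _ = Φ.τ k ≫ Φ.τ (k + 1) ≫ GS.ε₂ k 1 := by rw [τUp_two, Category.assoc]
    _ = Φ.τUp k 2 ≫ padA P k := by
        simp only [padA]
        exact (τUp2_k P k _).symm

lemma p2_gl : Φ.σUp k 2 ≫ padB P k = Φ.τUp k 2 ≫ GS.ε₂ k 1 := by
  calc Φ.σUp k 2 ≫ padB P k = Φ.σ k ≫ Φ.σ (k + 1) ≫ GS.ε₁ k 1 := by
        simp only [padB]; exact σUp2_k P k _
    _ = (Φ.σ k ≫ Φ.σ (k + 1)) ≫ GS.ε₁ k 1 := by rw [Category.assoc]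
    _ = Φ.σUp k 2 ≫ GS.ε₁ k 1 := by rw [σσ_eq]
    _ = _ := glue' k 1

lemma r1_gl : Φ.σUp k 2 ≫ padC P k = Φ.τUp k 2 ≫ GS.ε₂ k 1 := by
  calc Φ.σUp k 2 ≫ padC P k = Φ.σ k ≫ Φ.τ (k + 1) ≫ GS.ε₁ k 1 := by
        simp only [padC]; exact σUp2_k P k _
    _ = (Φ.σ k ≫ Φ.τ (k + 1)) ≫ GS.ε₁ k 1 := by rw [Category.assoc]
    _ = Φ.σUp k 2 ≫ GS.ε₁ k 1 := by rw [στ_eq]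
    _ = _ := glue' k 1

lemma r2_gl : Φ.σUp k 2 ≫ GS.ε₁ k 1 = Φ.τUp k 2 ≫ padD P k := by
  calc Φ.σUp k 2 ≫ GS.ε₁ k 1 = Φ.τUp k 2 ≫ GS.ε₂ k 1 := glue' k 1
    _ = (Φ.τ k ≫ Φ.σ (k + 1)) ≫ GS.ε₂ k 1 := by rw [τσ_eq]
    _ = Φ.τ k ≫ Φ.σ (k + 1) ≫ GS.ε₂ k 1 := by rw [Category.assoc]
    _ = Φ.τUp k 2 ≫ padD P k := by
        simp only [padD]
        exact (τUp2_k P k _).symm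

def p1m : Φ.D (k + 2) ⟶ GS.S (GSums.Btab k 1) :=
  P.nabla k 1 ≫ bdm GS (GS.ε₁ k 1) (padA P k) (p1_gl P k)
def p2m : Φ.D (k + 2) ⟶ GS.S (GSums.Btab k 1) :=
  P.nabla k 1 ≫ bdm GS (padB P k) (GS.ε₂ k 1) (p2_gl P k)
def r1m : Φ.D (k + 2) ⟶ GS.S (GSums.Btab k 1) :=
  P.nabla k 1 ≫ bdm GS (padC P k) (GS.ε₂ k 1) (r1_gl P k)
def r2m : Φ.D (k + 2) ⟶ GS.S (GSums.Btab k 1) :=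
  P.nabla k 1 ≫ bdm GS (GS.ε₁ k 1) (padD P k) (r2_gl P k)

lemma σ_p1m : Φ.σ (k + 1) ≫ p1m P k = P.nabla k 0 ≫ sideA k := by
  calc Φ.σ (k + 1) ≫ p1m P k
      = P.nabla k 0 ≫ bdm GS (Φ.σ (k + 1) ≫ GS.ε₁ k 1) (Φ.σ (k + 1) ≫ padA P k)
          (by simp only [padA]; rw [kσa]; exact glcA k) :=
        σ_nbdm1 (j := k) (k := 0) P _ _ _ _
    _ = P.nabla k 0 ≫ sideA k := by
        simp only [sideA]
        exact congrArg _ (bdm_congr _ _ rfl (by simp only [padA]; rw [kσa]))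

lemma τ_p1m : Φ.τ (k + 1) ≫ p1m P k = P.nabla k 0 ≫ sideB k := by
  calc Φ.τ (k + 1) ≫ p1m P k
      = P.nabla k 0 ≫ bdm GS (Φ.τ (k + 1) ≫ GS.ε₁ k 1) (Φ.τ (k + 1) ≫ padA P k)
          (by simp only [padA]; rw [kτa]; exact glcB k) :=
        τ_nbdm1 (j := k) (k := 0) P _ _ _ _
    _ = P.nabla k 0 ≫ sideB k := by
        simp only [sideB]
        exact congrArg _ (bdm_congr _ _ rfl (by simp only [padA]; rw [kτa]))

lemma σ_p2m : Φ.σ (k + 1) ≫ p2m P k = P.nabla k 0 ≫ sideC k := by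
  calc Φ.σ (k + 1) ≫ p2m P k
      = P.nabla k 0 ≫ bdm GS (Φ.σ (k + 1) ≫ padB P k) (Φ.σ (k + 1) ≫ GS.ε₂ k 1)
          (by simp only [padB]; rw [kσa]; exact glcC k) :=
        σ_nbdm1 (j := k) (k := 0) P _ _ _ _
    _ = P.nabla k 0 ≫ sideC k := by
        simp only [sideC]
        exact congrArg _ (bdm_congr _ _ (by simp only [padB]; rw [kσa]) rfl)

lemma τ_p2m : Φ.τ (k + 1) ≫ p2m P k = P.nabla k 0 ≫ sideA k := by
  calc Φ.τ (k + 1) ≫ p2m P k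
      = P.nabla k 0 ≫ bdm GS (Φ.τ (k + 1) ≫ padB P k) (Φ.τ (k + 1) ≫ GS.ε₂ k 1)
          (by simp only [padB]; rw [kτa]; exact glcA k) :=
        τ_nbdm1 (j := k) (k := 0) P _ _ _ _
    _ = P.nabla k 0 ≫ sideA k := by
        simp only [sideA]
        exact congrArg _ (bdm_congr _ _ (by simp only [padB]; rw [kτa]) rfl)

lemma σ_r1m : Φ.σ (k + 1) ≫ r1m P k = P.nabla k 0 ≫ sideD k := by
  calc Φ.σ (k + 1) ≫ r1m P k
      = P.nabla k 0 ≫ bdm GS (Φ.σ (k + 1) ≫ padC P k) (Φ.σ (k + 1) ≫ GS.ε₂ k 1)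
          (by simp only [padC]; rw [kσa]; exact glcD k) :=
        σ_nbdm1 (j := k) (k := 0) P _ _ _ _
    _ = P.nabla k 0 ≫ sideD k := by
        simp only [sideD]
        exact congrArg _ (bdm_congr _ _ (by simp only [padC]; rw [kσa]) rfl)

lemma τ_r1m : Φ.τ (k + 1) ≫ r1m P k = P.nabla k 0 ≫ sideB k := by
  calc Φ.τ (k + 1) ≫ r1m P k
      = P.nabla k 0 ≫ bdm GS (Φ.τ (k + 1) ≫ padC P k) (Φ.τ (k + 1) ≫ GS.ε₂ k 1)
          (by simp only [padC]; rw [kτa]; exact glcB k) :=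
        τ_nbdm1 (j := k) (k := 0) P _ _ _ _
    _ = P.nabla k 0 ≫ sideB k := by
        simp only [sideB]
        exact congrArg _ (bdm_congr _ _ (by simp only [padC]; rw [kτa]) rfl)

lemma σ_r2m : Φ.σ (k + 1) ≫ r2m P k = P.nabla k 0 ≫ sideC k := by
  calc Φ.σ (k + 1) ≫ r2m P k
      = P.nabla k 0 ≫ bdm GS (Φ.σ (k + 1) ≫ GS.ε₁ k 1) (Φ.σ (k + 1) ≫ padD P k)
          (by simp only [padD]; rw [kσa]; exact glcC k) :=
        σ_nbdm1 (j := k) (k := 0) P _ _ _ _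
    _ = P.nabla k 0 ≫ sideC k := by
        simp only [sideC]
        exact congrArg _ (bdm_congr _ _ rfl (by simp only [padD]; rw [kσa]))

lemma τ_r2m : Φ.τ (k + 1) ≫ r2m P k = P.nabla k 0 ≫ sideD k := by
  calc Φ.τ (k + 1) ≫ r2m P k
      = P.nabla k 0 ≫ bdm GS (Φ.τ (k + 1) ≫ GS.ε₁ k 1) (Φ.τ (k + 1) ≫ padD P k)
          (by simp only [padD]; rw [kτa]; exact glcD k) :=
        τ_nbdm1 (j := k) (k := 0) P _ _ _ _
    _ = P.nabla k 0 ≫ sideD k := by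
        simp only [sideD]
        exact congrArg _ (bdm_congr _ _ rfl (by simp only [padD]; rw [kτa]))

end CruxScene

section CruxScene2

variable (hC : GS.Contractible) (hm : GS.IsModel X) (P : Pregroupoidal GS) (k : ℕ)
variable (x : arr (Φ := Φ) X 0)

lemma comp2_unit {y z : arr (Φ := Φ) X (k + 2)}
    (hy1 : asrc y = unitIter P (k + 1) x) (hz2 : atgt z = unitIter P (k + 1) x) :
    Composable k 1 y z := by
  show pull (Φ.σUp k 2) y = pull (Φ.τUp k 2) z
  rw [pull_σUp2_z P k x hy1, pull_τUp2_z P k x hz2]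

/-- Scene (S3): commutation of the two padded compositions, from the interchange
lifting over the codimension-two sum. -/
lemma scene_comm (hC : GS.Contractible) {y z : arr (Φ := Φ) X (k + 2)}
    (hy1 : asrc y = unitIter P (k + 1) x) (hy2 : atgt y = unitIter P (k + 1) x)
    (hz1 : asrc z = unitIter P (k + 1) x) (hz2 : atgt z = unitIter P (k + 1) x) :
    Htp (k + 2)
      (gcomp hm P (k + 1) 0 (gcomp hm P k 1 y (unitIter P (k + 2) x))
        (gcomp hm P k 1 (unitIter P (k + 2) x) z))
      (gcomp hm P (k + 1) 0 (gcomp hm P k 1 (unitIter P (k + 2) x) z)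
        (gcomp hm P k 1 y (unitIter P (k + 2) x))) := by
  have hc2 : Composable k 1 y z := comp2_unit P k x hy1 hz2
  set ξ := pairUp hm y z hc2 with hξ
  have vι : pull (GS.ε₁ k 1) ξ = y := pairUp_ε₁ hm y z hc2
  have vε : pull (GS.ε₂ k 1) ξ = z := pairUp_ε₂ hm y z hc2
  have vA : pull (padA P k) ξ = unitIter P (k + 2) x := by
    simp only [padA]
    rw [pull_comp, pull_comp, vε, ← atgt_eq_pull, hz2, ← gunit_eq_pull, gunit_unit]
  have vB : pull (padB P k) ξ = unitIter P (k + 2) x := by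
    simp only [padB]
    rw [pull_comp, pull_comp, vι, ← asrc_eq_pull, hy1, ← gunit_eq_pull, gunit_unit]
  have vC : pull (padC P k) ξ = unitIter P (k + 2) x := by
    simp only [padC]
    rw [pull_comp, pull_comp, vι, ← atgt_eq_pull, hy2, ← gunit_eq_pull, gunit_unit]
  have vD : pull (padD P k) ξ = unitIter P (k + 2) x := by
    simp only [padD]
    rw [pull_comp, pull_comp, vε, ← asrc_eq_pull, hz1, ← gunit_eq_pull, gunit_unit]
  have v1 : pull (p1m P k) ξ = gcomp hm P k 1 y (unitIter P (k + 2) x) := by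
    have h := pull_nabla_bdm (j := k) (k := 1) hm P (GS.ε₁ k 1) (padA P k) (p1_gl P k) ξ
    rw [vι, vA] at h
    exact h
  have v2 : pull (p2m P k) ξ = gcomp hm P k 1 (unitIter P (k + 2) x) z := by
    have h := pull_nabla_bdm (j := k) (k := 1) hm P (padB P k) (GS.ε₂ k 1) (p2_gl P k) ξ
    rw [vB, vε] at h
    exact h
  have v1' : pull (r1m P k) ξ = gcomp hm P k 1 (unitIter P (k + 2) x) z := by
    have h := pull_nabla_bdm (j := k) (k := 1) hm P (padC P k) (GS.ε₂ k 1) (r1_gl P k) ξ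
    rw [vC, vε] at h
    exact h
  have v2' : pull (r2m P k) ξ = gcomp hm P k 1 y (unitIter P (k + 2) x) := by
    have h := pull_nabla_bdm (j := k) (k := 1) hm P (GS.ε₁ k 1) (padD P k) (r2_gl P k) ξ
    rw [vι, vD] at h
    exact h
  have glQ : Φ.σ (k + 1) ≫ p1m P k = Φ.τ (k + 1) ≫ p2m P k := by
    rw [σ_p1m, τ_p2m]
  have glQ' : Φ.σ (k + 1) ≫ r1m P k = Φ.τ (k + 1) ≫ r2m P k := by
    rw [σ_r1m, τ_r2m]
  have hv1 := pull_nabla_bdm0 (j := k + 1) hm P (p1m P k) (p2m P k) glQ ξ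
  have hv2 := pull_nabla_bdm0 (j := k + 1) hm P (r1m P k) (r2m P k) glQ' ξ
  rw [v1, v2] at hv1
  rw [v1', v2'] at hv2
  have par1 : Φ.σ (k + 1) ≫ (P.nabla (k + 1) 0 ≫ bdm0 GS (p1m P k) (p2m P k) glQ)
      = Φ.σ (k + 1) ≫ (P.nabla (k + 1) 0 ≫ bdm0 GS (r1m P k) (r2m P k) glQ') := by
    calc _ = Φ.σ (k + 1) ≫ p2m P k := σ_nbdm00 P _ _ _
      _ = P.nabla k 0 ≫ sideC k := σ_p2m P k
      _ = Φ.σ (k + 1) ≫ r2m P k := (σ_r2m P k).symm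
      _ = _ := (σ_nbdm00 P _ _ _).symm
  have par2 : Φ.τ (k + 1) ≫ (P.nabla (k + 1) 0 ≫ bdm0 GS (p1m P k) (p2m P k) glQ)
      = Φ.τ (k + 1) ≫ (P.nabla (k + 1) 0 ≫ bdm0 GS (r1m P k) (r2m P k) glQ') := by
    calc _ = Φ.τ (k + 1) ≫ p1m P k := τ_nbdm00 P _ _ _
      _ = P.nabla k 0 ≫ sideB k := τ_p1m P k
      _ = Φ.τ (k + 1) ≫ r1m P k := (τ_r1m P k).symm
      _ = _ := (τ_nbdm00 P _ _ _).symm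
  have h := htp_pull (m := k + 1) hC (GSums.Btab k 1) (by rw [dim_Btab]; omega)
    _ _ par1 par2 ξ
  rw [hv1, hv2] at h
  exact h

end CruxScene2

section Constancy

variable (P : Pregroupoidal GS) (k : ℕ)

lemma glue1' : Φ.σ (k + 1) ≫ GS.ε₁ (k + 1) 0 = Φ.τ (k + 1) ≫ GS.ε₂ (k + 1) 0 := by
  have h := glue' (GS := GS) (k + 1) 0
  rw [σUp_one, τUp_one] at h
  simpa using h

lemma σUp2_nablaε₂ :
    Φ.σUp k 2 ≫ P.nabla (k + 1) 0 = Φ.σUp k 2 ≫ GS.ε₂ (k + 1) 0 := by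
  rw [σUp_two, Category.assoc, Category.assoc, P.nabla_σ₀]

lemma τUp2_nablaε₁ :
    Φ.τUp k 2 ≫ P.nabla (k + 1) 0 = Φ.τUp k 2 ≫ GS.ε₁ (k + 1) 0 := by
  rw [τUp_two, Category.assoc, Category.assoc, P.nabla_τ₀]

lemma σUp2_nablaε₁ :
    Φ.σUp k 2 ≫ P.nabla (k + 1) 0 = Φ.σUp k 2 ≫ GS.ε₁ (k + 1) 0 :=
  (σUp2_nablaε₂ P k).trans (σUp2_ε k).symm

lemma τUp2_nablaε₂ :
    Φ.τUp k 2 ≫ P.nabla (k + 1) 0 = Φ.τUp k 2 ≫ GS.ε₂ (k + 1) 0 :=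
  (τUp2_nablaε₁ P k).trans (τUp2_ε k)

lemma padσ1_fact (c : Φ.D (k + 2) ⟶ GS.S (GSums.Btab (k + 1) 0))
    (hc : Φ.σUp k 2 ≫ P.nabla (k + 1) 0 = Φ.σUp k 2 ≫ c) :
    padσ1 P k ≫ P.nabla (k + 1) 0 = padσ1 P k ≫ c := by
  simp only [padσ1, Category.assoc]
  rw [hc]

lemma padτ1_fact (c : Φ.D (k + 2) ⟶ GS.S (GSums.Btab (k + 1) 0))
    (hc : Φ.τUp k 2 ≫ P.nabla (k + 1) 0 = Φ.τUp k 2 ≫ c) :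
    padτ1 P k ≫ P.nabla (k + 1) 0 = padτ1 P k ≫ c := by
  simp only [padτ1, Category.assoc]
  rw [hc]

lemma Yσm_fact : Yσm P k ≫ P.nabla (k + 1) 0 = Yσm P k ≫ GS.ε₂ (k + 1) 0 := by
  have hb : bdm (j := k) (k := 0) GS (Φ.σ (k + 1)) (padσ1 P k) (ysm_gl P k) ≫ P.nabla (k + 1) 0
      = bdm (j := k) (k := 0) GS (Φ.σ (k + 1)) (padσ1 P k) (ysm_gl P k) ≫ GS.ε₂ (k + 1) 0 := by
    refine bdm_ext _ _ ?_ ?_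
    · rw [← Category.assoc, ← Category.assoc, ι_bdm]
      exact P.nabla_σ₀ (k + 1)
    · rw [← Category.assoc, ← Category.assoc, ε₂_bdm,
        padσ1_fact P k _ (σUp2_nablaε₂ P k)]
  rw [Yσm, Category.assoc, Category.assoc, hb]

lemma Yτm_fact : Yτm P k ≫ P.nabla (k + 1) 0 = Yτm P k ≫ GS.ε₁ (k + 1) 0 := by
  have hb : bdm (j := k) (k := 0) GS (Φ.τ (k + 1)) (padσ1 P k) (ytm_gl P k) ≫ P.nabla (k + 1) 0
      = bdm (j := k) (k := 0) GS (Φ.τ (k + 1)) (padσ1 P k) (ytm_gl P k) ≫ GS.ε₁ (k + 1) 0 := by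
    refine bdm_ext _ _ ?_ ?_
    · rw [← Category.assoc, ← Category.assoc, ι_bdm]
      exact P.nabla_τ₀ (k + 1)
    · rw [← Category.assoc, ← Category.assoc, ε₂_bdm,
        padσ1_fact P k _ (σUp2_nablaε₁ P k)]
  rw [Yτm, Category.assoc, Category.assoc, hb]

lemma Y'σm_fact : Y'σm P k ≫ P.nabla (k + 1) 0 = Y'σm P k ≫ GS.ε₂ (k + 1) 0 := by
  have hb : bdm (j := k) (k := 0) GS (padτ1 P k) (Φ.σ (k + 1)) (y'sm_gl P k) ≫ P.nabla (k + 1) 0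
      = bdm (j := k) (k := 0) GS (padτ1 P k) (Φ.σ (k + 1)) (y'sm_gl P k) ≫ GS.ε₂ (k + 1) 0 := by
    refine bdm_ext _ _ ?_ ?_
    · rw [← Category.assoc, ← Category.assoc, ι_bdm,
        padτ1_fact P k _ (τUp2_nablaε₂ P k)]
    · rw [← Category.assoc, ← Category.assoc, ε₂_bdm]
      exact P.nabla_σ₀ (k + 1)
  rw [Y'σm, Category.assoc, Category.assoc, hb]

lemma Y'τm_fact : Y'τm P k ≫ P.nabla (k + 1) 0 = Y'τm P k ≫ GS.ε₁ (k + 1) 0 := by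
  have hb : bdm (j := k) (k := 0) GS (padτ1 P k) (Φ.τ (k + 1)) (y'tm_gl P k) ≫ P.nabla (k + 1) 0
      = bdm (j := k) (k := 0) GS (padτ1 P k) (Φ.τ (k + 1)) (y'tm_gl P k) ≫ GS.ε₁ (k + 1) 0 := by
    refine bdm_ext _ _ ?_ ?_
    · rw [← Category.assoc, ← Category.assoc, ι_bdm,
        padτ1_fact P k _ (τUp2_nablaε₁ P k)]
    · rw [← Category.assoc, ← Category.assoc, ε₂_bdm]
      exact P.nabla_τ₀ (k + 1)
  rw [Y'τm, Category.assoc, Category.assoc, hb]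

/-- Generic letter-constancy scene: the value of a fixed cylinder on a composite
depends, up to homotopy, only on one of the factors. -/
lemma scene_letter (hC : GS.Contractible) (hm : GS.IsModel X)
    (H : Φ.D (k + 2) ⟶ Φ.D (k + 2)) (E1 E2 : Φ.D (k + 1) ⟶ Φ.D (k + 2))
    (hHσ : Φ.σ (k + 1) ≫ H = E1) (hHτ : Φ.τ (k + 1) ≫ H = E2)
    (c : Φ.D (k + 2) ⟶ GS.S (GSums.Btab (k + 1) 0))
    (h1 : E1 ≫ P.nabla (k + 1) 0 = E1 ≫ c) (h2 : E2 ≫ P.nabla (k + 1) 0 = E2 ≫ c)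
    {a b : arr (Φ := Φ) X (k + 2)} (hc : Composable (k + 1) 0 a b) :
    Htp (k + 2) (pull H (gcomp hm P (k + 1) 0 a b))
      (pull H (pull c (pairUp hm a b hc))) := by
  have par1 : Φ.σ (k + 1) ≫ (H ≫ P.nabla (k + 1) 0) = Φ.σ (k + 1) ≫ (H ≫ c) := by
    rw [← Category.assoc, ← Category.assoc, hHσ, h1]
  have par2 : Φ.τ (k + 1) ≫ (H ≫ P.nabla (k + 1) 0) = Φ.τ (k + 1) ≫ (H ≫ c) := by
    rw [← Category.assoc, ← Category.assoc, hHτ, h2]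
  have h := htp_pull (m := k + 1) hC (GSums.Btab (k + 1) 0) (by rw [dim_Btab]; omega)
    _ _ par1 par2 (pairUp hm a b hc)
  rw [pull_comp, pull_comp, ← gcomp_eq (j := k + 1) (k := 0) hm P a b hc] at h
  exact h

lemma const_Hτ (hC : GS.Contractible) (hm : GS.IsModel X)
    {a b : arr (Φ := Φ) X (k + 2)} (hc : Composable (k + 1) 0 a b) :
    Htp (k + 2) (pull (Hτ hC P k) (gcomp hm P (k + 1) 0 a b)) (pull (Hτ hC P k) a) := by
  have h := scene_letter P k hC hm (Hτ hC P k) (Yτm P k) (Φ.τ (k + 1))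
    (Hτ_σ hC P k) (Hτ_τ hC P k) (GS.ε₁ (k + 1) 0) (Yτm_fact P k) (P.nabla_τ₀ (k + 1)) hc
  rw [pairUp_ε₁] at h
  exact h

lemma const_Hσ (hC : GS.Contractible) (hm : GS.IsModel X)
    {a b : arr (Φ := Φ) X (k + 2)} (hc : Composable (k + 1) 0 a b) :
    Htp (k + 2) (pull (Hσ hC P k) (gcomp hm P (k + 1) 0 a b)) (pull (Hσ hC P k) b) := by
  have h := scene_letter P k hC hm (Hσ hC P k) (Yσm P k) (Φ.σ (k + 1))
    (Hσ_σ hC P k) (Hσ_τ hC P k) (GS.ε₂ (k + 1) 0) (Yσm_fact P k) (P.nabla_σ₀ (k + 1)) hc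
  rw [pairUp_ε₂] at h
  exact h

lemma const_H3 (hC : GS.Contractible) (hm : GS.IsModel X)
    {a b : arr (Φ := Φ) X (k + 2)} (hc : Composable (k + 1) 0 a b) :
    Htp (k + 2) (pull (H3 hC P k) (gcomp hm P (k + 1) 0 a b)) (pull (H3 hC P k) a) := by
  have h := scene_letter P k hC hm (H3 hC P k) (Y'τm P k) (Yτm P k)
    (H3_σ hC P k) (H3_τ hC P k) (GS.ε₁ (k + 1) 0) (Y'τm_fact P k) (Yτm_fact P k) hc
  rw [pairUp_ε₁] at h
  exact h

lemma const_H4 (hC : GS.Contractible) (hm : GS.IsModel X)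
    {a b : arr (Φ := Φ) X (k + 2)} (hc : Composable (k + 1) 0 a b) :
    Htp (k + 2) (pull (H4 hC P k) (gcomp hm P (k + 1) 0 a b)) (pull (H4 hC P k) b) := by
  have h := scene_letter P k hC hm (H4 hC P k) (Y'σm P k) (Yσm P k)
    (H4_σ hC P k) (H4_τ hC P k) (GS.ε₂ (k + 1) 0) (Y'σm_fact P k) (Yσm_fact P k) hc
  rw [pairUp_ε₂] at h
  exact h

/-- class invariance of cylinder values. -/
lemma pull_htp (hC : GS.Contractible) (H : Φ.D (k + 2) ⟶ Φ.D (k + 2))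
    (h1 : (Φ.σ (k + 1) ≫ H) ≫ Φ.σ (k + 2) = (Φ.σ (k + 1) ≫ H) ≫ Φ.τ (k + 2))
    (h2 : (Φ.τ (k + 1) ≫ H) ≫ Φ.σ (k + 2) = (Φ.τ (k + 1) ≫ H) ≫ Φ.τ (k + 2))
    {z z' : arr (Φ := Φ) X (k + 2)} (e : Htp (k + 2) z z') :
    Htp (k + 2) (pull H z) (pull H z') := by
  obtain ⟨h, e1, e2⟩ := e
  obtain ⟨L, L1, L2⟩ := lift_globe hC (m := k + 1) (i := k + 3) (le_refl _)
    (H ≫ Φ.σ (k + 2)) (H ≫ Φ.τ (k + 2))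
    (by rw [← Category.assoc, ← Category.assoc]; exact h1)
    (by rw [← Category.assoc, ← Category.assoc]; exact h2)
  refine ⟨pull L h, ?_, ?_⟩
  · rw [asrc_eq_pull, ← pull_comp, L1, pull_comp, ← asrc_eq_pull, e1]
  · rw [atgt_eq_pull, ← pull_comp, L2, pull_comp, ← atgt_eq_pull, e2]

lemma σUp2_στ : Φ.σUp k 2 ≫ Φ.σ (k + 2) = Φ.σUp k 2 ≫ Φ.τ (k + 2) :=
  calc Φ.σUp k 2 ≫ Φ.σ (k + 2) = Φ.σUp k 3 := rfl
    _ = _ := (Φ.σUp_τ k 1).symm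

lemma τUp2_στ : Φ.τUp k 2 ≫ Φ.σ (k + 2) = Φ.τUp k 2 ≫ Φ.τ (k + 2) :=
  calc Φ.τUp k 2 ≫ Φ.σ (k + 2) = Φ.τUp k 3 := Φ.τUp_σ k 1
    _ = _ := rfl

lemma padσ1_στ : padσ1 P k ≫ Φ.σ (k + 2) = padσ1 P k ≫ Φ.τ (k + 2) := by
  simp only [padσ1, Category.assoc]
  rw [σUp2_στ]

lemma padτ1_στ : padτ1 P k ≫ Φ.σ (k + 2) = padτ1 P k ≫ Φ.τ (k + 2) := by
  simp only [padτ1, Category.assoc]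
  rw [τUp2_στ]

lemma Yσm_στ : Yσm P k ≫ Φ.σ (k + 2) = Yσm P k ≫ Φ.τ (k + 2) := by
  have hb : bdm (j := k) (k := 0) GS (Φ.σ (k + 1)) (padσ1 P k) (ysm_gl P k) ≫ Φ.σ (k + 2)
      = bdm (j := k) (k := 0) GS (Φ.σ (k + 1)) (padσ1 P k) (ysm_gl P k) ≫ Φ.τ (k + 2) := by
    refine bdm_ext _ _ ?_ ?_
    · rw [← Category.assoc, ← Category.assoc, ι_bdm]; exact Φ.relσ (k + 1)
    · rw [← Category.assoc, ← Category.assoc, ε₂_bdm]; exact padσ1_στ P k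
  rw [Yσm, Category.assoc, Category.assoc, hb]

lemma Yτm_στ : Yτm P k ≫ Φ.σ (k + 2) = Yτm P k ≫ Φ.τ (k + 2) := by
  have hb : bdm (j := k) (k := 0) GS (Φ.τ (k + 1)) (padσ1 P k) (ytm_gl P k) ≫ Φ.σ (k + 2)
      = bdm (j := k) (k := 0) GS (Φ.τ (k + 1)) (padσ1 P k) (ytm_gl P k) ≫ Φ.τ (k + 2) := by
    refine bdm_ext _ _ ?_ ?_
    · rw [← Category.assoc, ← Category.assoc, ι_bdm]; exact Φ.relτ (k + 1)
    · rw [← Category.assoc, ← Category.assoc, ε₂_bdm]; exact padσ1_στ P k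
  rw [Yτm, Category.assoc, Category.assoc, hb]

lemma Y'σm_στ : Y'σm P k ≫ Φ.σ (k + 2) = Y'σm P k ≫ Φ.τ (k + 2) := by
  have hb : bdm (j := k) (k := 0) GS (padτ1 P k) (Φ.σ (k + 1)) (y'sm_gl P k) ≫ Φ.σ (k + 2)
      = bdm (j := k) (k := 0) GS (padτ1 P k) (Φ.σ (k + 1)) (y'sm_gl P k) ≫ Φ.τ (k + 2) := by
    refine bdm_ext _ _ ?_ ?_
    · rw [← Category.assoc, ← Category.assoc, ι_bdm]; exact padτ1_στ P k
    · rw [← Category.assoc, ← Category.assoc, ε₂_bdm]; exact Φ.relσ (k + 1)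
  rw [Y'σm, Category.assoc, Category.assoc, hb]

lemma Y'τm_στ : Y'τm P k ≫ Φ.σ (k + 2) = Y'τm P k ≫ Φ.τ (k + 2) := by
  have hb : bdm (j := k) (k := 0) GS (padτ1 P k) (Φ.τ (k + 1)) (y'tm_gl P k) ≫ Φ.σ (k + 2)
      = bdm (j := k) (k := 0) GS (padτ1 P k) (Φ.τ (k + 1)) (y'tm_gl P k) ≫ Φ.τ (k + 2) := by
    refine bdm_ext _ _ ?_ ?_
    · rw [← Category.assoc, ← Category.assoc, ι_bdm]; exact padτ1_στ P k
    · rw [← Category.assoc, ← Category.assoc, ε₂_bdm]; exact Φ.relτ (k + 1)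
  rw [Y'τm, Category.assoc, Category.assoc, hb]

lemma htp_Hσ (hC : GS.Contractible) {z z' : arr (Φ := Φ) X (k + 2)}
    (e : Htp (k + 2) z z') : Htp (k + 2) (pull (Hσ hC P k) z) (pull (Hσ hC P k) z') :=
  pull_htp k hC _ (by rw [Hσ_σ]; exact Yσm_στ P k)
    (by rw [Hσ_τ]; exact Φ.relσ (k + 1)) e

lemma htp_Hτ (hC : GS.Contractible) {z z' : arr (Φ := Φ) X (k + 2)}
    (e : Htp (k + 2) z z') : Htp (k + 2) (pull (Hτ hC P k) z) (pull (Hτ hC P k) z') :=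
  pull_htp k hC _ (by rw [Hτ_σ]; exact Yτm_στ P k)
    (by rw [Hτ_τ]; exact Φ.relτ (k + 1)) e

lemma htp_H3 (hC : GS.Contractible) {z z' : arr (Φ := Φ) X (k + 2)}
    (e : Htp (k + 2) z z') : Htp (k + 2) (pull (H3 hC P k) z) (pull (H3 hC P k) z') :=
  pull_htp k hC _ (by rw [H3_σ]; exact Y'τm_στ P k)
    (by rw [H3_τ]; exact Yτm_στ P k) e

lemma htp_H4 (hC : GS.Contractible) {z z' : arr (Φ := Φ) X (k + 2)}
    (e : Htp (k + 2) z z') : Htp (k + 2) (pull (H4 hC P k) z) (pull (H4 hC P k) z') :=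
  pull_htp k hC _ (by rw [H4_σ]; exact Y'σm_στ P k)
    (by rw [H4_τ]; exact Yσm_στ P k) e

end Constancy

section Collapse

variable (hC : GS.Contractible) (hm : GS.IsModel X) (P : Pregroupoidal GS) (k : ℕ)
variable (x : arr (Φ := Φ) X 0)

lemma m0_gl : Φ.σ k ≫ kDown P (k + 1) = Φ.τ k ≫ kDown P (k + 1) := by
  show Φ.σ k ≫ (P.kappa k ≫ kDown P k) = Φ.τ k ≫ (P.kappa k ≫ kDown P k)
  rw [kσa, kτa]

/-- the collapse of the binary sum onto the point. -/
def Em : Φ.D (k + 1) ⟶ Φ.D 0 :=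
  P.nabla k 0 ≫ bdm0 GS (kDown P (k + 1)) (kDown P (k + 1)) (m0_gl P k)

lemma pull_Em : pull (Em P k) x
    = gcomp hm P k 0 (unitIter P (k + 1) x) (unitIter P (k + 1) x) :=
  pull_nabla_bdm0 (j := k) hm P (kDown P (k + 1)) (kDown P (k + 1)) (m0_gl P k) x

lemma kD2_σ : Φ.σ (k + 1) ≫ kDown P (k + 2) = kDown P (k + 1) := by
  show Φ.σ (k + 1) ≫ (P.kappa (k + 1) ≫ kDown P (k + 1)) = _
  rw [kσa]

lemma kD2_τ : Φ.τ (k + 1) ≫ kDown P (k + 2) = kDown P (k + 1) := by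
  show Φ.τ (k + 1) ≫ (P.kappa (k + 1) ≫ kDown P (k + 1)) = _
  rw [kτa]

lemma σUp2_kD : Φ.σUp k 2 ≫ kDown P (k + 2) = kDown P k := by
  show Φ.σUp k 2 ≫ (P.kappa (k + 1) ≫ kDown P (k + 1)) = _
  rw [σUp2_k]
  show Φ.σ k ≫ (P.kappa k ≫ kDown P k) = _
  rw [kσa]

lemma τUp2_kD : Φ.τUp k 2 ≫ kDown P (k + 2) = kDown P k := by
  show Φ.τUp k 2 ≫ (P.kappa (k + 1) ≫ kDown P (k + 1)) = _
  rw [τUp2_k]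
  show Φ.τ k ≫ (P.kappa k ≫ kDown P k) = _
  rw [kτa]

lemma padσ1_kD : padσ1 P k ≫ kDown P (k + 2) = kDown P (k + 1) := by
  simp only [padσ1, Category.assoc]
  rw [σUp2_kD]
  rfl

lemma padτ1_kD : padτ1 P k ≫ kDown P (k + 2) = kDown P (k + 1) := by
  simp only [padτ1, Category.assoc]
  rw [τUp2_kD]
  rfl

lemma Yσm_kD : Yσm P k ≫ kDown P (k + 2) = Em P k := by
  have hb : bdm (j := k) (k := 0) GS (Φ.σ (k + 1)) (padσ1 P k) (ysm_gl P k)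
        ≫ kDown P (k + 2)
      = bdm0 GS (kDown P (k + 1)) (kDown P (k + 1)) (m0_gl P k) := by
    refine bdm_ext _ _ ?_ ?_
    · rw [← Category.assoc, ι_bdm, kD2_σ]
      exact (ι_bdm0 _ _ _).symm
    · rw [← Category.assoc, ε₂_bdm, padσ1_kD]
      exact (ε₂_bdm0 _ _ _).symm
  rw [Yσm, Category.assoc, hb]
  rfl

lemma Yτm_kD : Yτm P k ≫ kDown P (k + 2) = Em P k := by
  have hb : bdm (j := k) (k := 0) GS (Φ.τ (k + 1)) (padσ1 P k) (ytm_gl P k)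
        ≫ kDown P (k + 2)
      = bdm0 GS (kDown P (k + 1)) (kDown P (k + 1)) (m0_gl P k) := by
    refine bdm_ext _ _ ?_ ?_
    · rw [← Category.assoc, ι_bdm, kD2_τ]
      exact (ι_bdm0 _ _ _).symm
    · rw [← Category.assoc, ε₂_bdm, padσ1_kD]
      exact (ε₂_bdm0 _ _ _).symm
  rw [Yτm, Category.assoc, hb]
  rfl

lemma Y'σm_kD : Y'σm P k ≫ kDown P (k + 2) = Em P k := by
  have hb : bdm (j := k) (k := 0) GS (padτ1 P k) (Φ.σ (k + 1)) (y'sm_gl P k)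
        ≫ kDown P (k + 2)
      = bdm0 GS (kDown P (k + 1)) (kDown P (k + 1)) (m0_gl P k) := by
    refine bdm_ext _ _ ?_ ?_
    · rw [← Category.assoc, ι_bdm, padτ1_kD]
      exact (ι_bdm0 _ _ _).symm
    · rw [← Category.assoc, ε₂_bdm, kD2_σ]
      exact (ε₂_bdm0 _ _ _).symm
  rw [Y'σm, Category.assoc, hb]
  rfl

lemma Y'τm_kD : Y'τm P k ≫ kDown P (k + 2) = Em P k := by
  have hb : bdm (j := k) (k := 0) GS (padτ1 P k) (Φ.τ (k + 1)) (y'tm_gl P k)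
        ≫ kDown P (k + 2)
      = bdm0 GS (kDown P (k + 1)) (kDown P (k + 1)) (m0_gl P k) := by
    refine bdm_ext _ _ ?_ ?_
    · rw [← Category.assoc, ι_bdm, padτ1_kD]
      exact (ι_bdm0 _ _ _).symm
    · rw [← Category.assoc, ε₂_bdm, kD2_τ]
      exact (ε₂_bdm0 _ _ _).symm
  rw [Y'τm, Category.assoc, hb]
  rfl

lemma scene_W1U (hC : GS.Contractible) :
    Htp (k + 2) (pull (H3 hC P k) (unitIter P (k + 2) x))
      (gunit P (gcomp hm P k 0 (unitIter P (k + 1) x) (unitIter P (k + 1) x))) := by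
  have par1 : Φ.σ (k + 1) ≫ (H3 hC P k ≫ kDown P (k + 2))
      = Φ.σ (k + 1) ≫ (P.kappa (k + 1) ≫ Em P k) := by
    rw [kσa, ← Category.assoc, H3_σ]
    exact Y'τm_kD P k
  have par2 : Φ.τ (k + 1) ≫ (H3 hC P k ≫ kDown P (k + 2))
      = Φ.τ (k + 1) ≫ (P.kappa (k + 1) ≫ Em P k) := by
    rw [kτa, ← Category.assoc, H3_τ]
    exact Yτm_kD P k
  have h := htp_pull_globe (m := k + 1) (i := 0) hC (by omega) _ _ par1 par2 x
  rw [pull_comp, pull_comp, pull_Em hm P k x] at h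
  exact h

lemma scene_W2U (hC : GS.Contractible) :
    Htp (k + 2) (pull (H4 hC P k) (unitIter P (k + 2) x))
      (gunit P (gcomp hm P k 0 (unitIter P (k + 1) x) (unitIter P (k + 1) x))) := by
  have par1 : Φ.σ (k + 1) ≫ (H4 hC P k ≫ kDown P (k + 2))
      = Φ.σ (k + 1) ≫ (P.kappa (k + 1) ≫ Em P k) := by
    rw [kσa, ← Category.assoc, H4_σ]
    exact Y'σm_kD P k
  have par2 : Φ.τ (k + 1) ≫ (H4 hC P k ≫ kDown P (k + 2))
      = Φ.τ (k + 1) ≫ (P.kappa (k + 1) ≫ Em P k) := by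
    rw [kτa, ← Category.assoc, H4_τ]
    exact Yσm_kD P k
  have h := htp_pull_globe (m := k + 1) (i := 0) hC (by omega) _ _ par1 par2 x
  rw [pull_comp, pull_comp, pull_Em hm P k x] at h
  exact h

lemma scene_ThPh (hC : GS.Contractible) :
    Htp (k + 2) (pull (Hσ hC P k) (unitIter P (k + 2) x))
      (pull (Hτ hC P k) (unitIter P (k + 2) x)) := by
  have par1 : Φ.σ (k + 1) ≫ (Hσ hC P k ≫ kDown P (k + 2))
      = Φ.σ (k + 1) ≫ (Hτ hC P k ≫ kDown P (k + 2)) := by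
    rw [← Category.assoc, ← Category.assoc, Hσ_σ, Hτ_σ, Yσm_kD, Yτm_kD]
  have par2 : Φ.τ (k + 1) ≫ (Hσ hC P k ≫ kDown P (k + 2))
      = Φ.τ (k + 1) ≫ (Hτ hC P k ≫ kDown P (k + 2)) := by
    rw [← Category.assoc, ← Category.assoc, Hσ_τ, Hτ_τ, kD2_σ, kD2_τ]
  have h := htp_pull_globe (m := k + 1) (i := 0) hC (by omega) _ _ par1 par2 x
  rw [pull_comp, pull_comp] at h
  exact h

/-- Scene: multiplicativity of the `p`-padding up to an interchange cell. -/
lemma scene_mult (hC : GS.Contractible) {a b : arr (Φ := Φ) X (k + 2)}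
    (hc : Composable (k + 1) 0 a b) :
    Htp (k + 2) (pull (pm P k) (gcomp hm P (k + 1) 0 a b))
      (gcomp hm P (k + 1) 0 (pull (pm P k) a)
        (gcomp hm P (k + 1) 0 (pull (Hc hC P k) (pairUp hm a b hc))
          (pull (pm P k) b))) := by
  have glM1 : Φ.σ (k + 1) ≫ Hc hC P k
      = Φ.τ (k + 1) ≫ (pm P k ≫ GS.ε₂ (k + 1) 0) := by
    rw [Hc_σ, ← Category.assoc, τ_pm]
  have glM2 : Φ.σ (k + 1) ≫ (pm P k ≫ GS.ε₁ (k + 1) 0)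
      = Φ.τ (k + 1) ≫ (P.nabla (k + 1) 0 ≫ bdm0 GS (Hc hC P k)
          (pm P k ≫ GS.ε₂ (k + 1) 0) glM1) := by
    calc Φ.σ (k + 1) ≫ (pm P k ≫ GS.ε₁ (k + 1) 0)
        = (Φ.σ (k + 1) ≫ pm P k) ≫ GS.ε₁ (k + 1) 0 := (Category.assoc _ _ _).symm
      _ = Yσm P k ≫ GS.ε₁ (k + 1) 0 := by rw [σ_pm]
      _ = Φ.τ (k + 1) ≫ Hc hC P k := (Hc_τ hC P k).symm
      _ = _ := (τ_nbdm00 P _ _ _).symm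
  have par1 : Φ.σ (k + 1) ≫ (pm P k ≫ P.nabla (k + 1) 0)
      = Φ.σ (k + 1) ≫ (P.nabla (k + 1) 0 ≫ bdm0 GS (pm P k ≫ GS.ε₁ (k + 1) 0)
          (P.nabla (k + 1) 0 ≫ bdm0 GS (Hc hC P k)
            (pm P k ≫ GS.ε₂ (k + 1) 0) glM1) glM2) := by
    calc Φ.σ (k + 1) ≫ (pm P k ≫ P.nabla (k + 1) 0)
        = (Φ.σ (k + 1) ≫ pm P k) ≫ P.nabla (k + 1) 0 := (Category.assoc _ _ _).symm
      _ = Yσm P k ≫ P.nabla (k + 1) 0 := by rw [σ_pm]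
      _ = Yσm P k ≫ GS.ε₂ (k + 1) 0 := Yσm_fact P k
      _ = (Φ.σ (k + 1) ≫ pm P k) ≫ GS.ε₂ (k + 1) 0 := by rw [σ_pm]
      _ = Φ.σ (k + 1) ≫ (pm P k ≫ GS.ε₂ (k + 1) 0) := Category.assoc _ _ _
      _ = Φ.σ (k + 1) ≫ (P.nabla (k + 1) 0 ≫ bdm0 GS (Hc hC P k)
            (pm P k ≫ GS.ε₂ (k + 1) 0) glM1) := (σ_nbdm00 P _ _ _).symm
      _ = _ := (σ_nbdm00 P _ _ _).symm
  have par2 : Φ.τ (k + 1) ≫ (pm P k ≫ P.nabla (k + 1) 0)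
      = Φ.τ (k + 1) ≫ (P.nabla (k + 1) 0 ≫ bdm0 GS (pm P k ≫ GS.ε₁ (k + 1) 0)
          (P.nabla (k + 1) 0 ≫ bdm0 GS (Hc hC P k)
            (pm P k ≫ GS.ε₂ (k + 1) 0) glM1) glM2) := by
    calc Φ.τ (k + 1) ≫ (pm P k ≫ P.nabla (k + 1) 0)
        = (Φ.τ (k + 1) ≫ pm P k) ≫ P.nabla (k + 1) 0 := (Category.assoc _ _ _).symm
      _ = Yτm P k ≫ P.nabla (k + 1) 0 := by rw [τ_pm]
      _ = Yτm P k ≫ GS.ε₁ (k + 1) 0 := Yτm_fact P k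
      _ = (Φ.τ (k + 1) ≫ pm P k) ≫ GS.ε₁ (k + 1) 0 := by rw [τ_pm]
      _ = Φ.τ (k + 1) ≫ (pm P k ≫ GS.ε₁ (k + 1) 0) := Category.assoc _ _ _
      _ = _ := (τ_nbdm00 P _ _ _).symm
  have h := htp_pull (m := k + 1) hC (GSums.Btab (k + 1) 0) (by rw [dim_Btab]; omega)
    _ _ par1 par2 (pairUp hm a b hc)
  have v0 : pull (pm P k ≫ P.nabla (k + 1) 0) (pairUp hm a b hc)
      = pull (pm P k) (gcomp hm P (k + 1) 0 a b) := by
    rw [pull_comp, ← gcomp_eq (j := k + 1) (k := 0) hm P a b hc]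
  have vin := pull_nabla_bdm0 (j := k + 1) hm P (Hc hC P k)
    (pm P k ≫ GS.ε₂ (k + 1) 0) glM1 (pairUp hm a b hc)
  have vb : pull (pm P k ≫ GS.ε₂ (k + 1) 0) (pairUp hm a b hc) = pull (pm P k) b := by
    rw [pull_comp, pairUp_ε₂]
  rw [vb] at vin
  have vout := pull_nabla_bdm0 (j := k + 1) hm P (pm P k ≫ GS.ε₁ (k + 1) 0)
    (P.nabla (k + 1) 0 ≫ bdm0 GS (Hc hC P k) (pm P k ≫ GS.ε₂ (k + 1) 0) glM1)
    glM2 (pairUp hm a b hc)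
  have va : pull (pm P k ≫ GS.ε₁ (k + 1) 0) (pairUp hm a b hc) = pull (pm P k) a := by
    rw [pull_comp, pairUp_ε₁]
  rw [va, vin] at vout
  rw [v0, vout] at h
  exact h

/-- Scene: identification of the interchange cell as a conjugation constant. -/
lemma scene_cc (hC : GS.Contractible) {a b : arr (Φ := Φ) X (k + 2)}
    (hc : Composable (k + 1) 0 a b) :
    Htp (k + 2) (pull (Hc hC P k) (pairUp hm a b hc))
      (gcomp hm P (k + 1) 0 (gwinv P (k + 1) 0 (pull (Hσ hC P k) a))
        (pull (Hτ hC P k) b)) := by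
  have glA : Φ.σ (k + 1) ≫ (P.winv (k + 1) 0 ≫ Hσ hC P k ≫ GS.ε₁ (k + 1) 0)
      = Φ.τ (k + 1) ≫ (Hτ hC P k ≫ GS.ε₂ (k + 1) 0) := by
    calc Φ.σ (k + 1) ≫ (P.winv (k + 1) 0 ≫ Hσ hC P k ≫ GS.ε₁ (k + 1) 0)
        = Φ.τ (k + 1) ≫ (Hσ hC P k ≫ GS.ε₁ (k + 1) 0) := winvσa P k _
      _ = (Φ.τ (k + 1) ≫ Hσ hC P k) ≫ GS.ε₁ (k + 1) 0 := (Category.assoc _ _ _).symm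
      _ = Φ.σ (k + 1) ≫ GS.ε₁ (k + 1) 0 := by rw [Hσ_τ]
      _ = Φ.τ (k + 1) ≫ GS.ε₂ (k + 1) 0 := glue1' k
      _ = (Φ.τ (k + 1) ≫ Hτ hC P k) ≫ GS.ε₂ (k + 1) 0 := by rw [Hτ_τ]
      _ = _ := Category.assoc _ _ _
  have par1 : Φ.σ (k + 1) ≫ Hc hC P k
      = Φ.σ (k + 1) ≫ (P.nabla (k + 1) 0 ≫ bdm0 GS
          (P.winv (k + 1) 0 ≫ Hσ hC P k ≫ GS.ε₁ (k + 1) 0)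
          (Hτ hC P k ≫ GS.ε₂ (k + 1) 0) glA) := by
    calc Φ.σ (k + 1) ≫ Hc hC P k
        = Yτm P k ≫ GS.ε₂ (k + 1) 0 := Hc_σ hC P k
      _ = (Φ.σ (k + 1) ≫ Hτ hC P k) ≫ GS.ε₂ (k + 1) 0 := by rw [Hτ_σ]
      _ = Φ.σ (k + 1) ≫ (Hτ hC P k ≫ GS.ε₂ (k + 1) 0) := Category.assoc _ _ _
      _ = _ := (σ_nbdm00 P _ _ _).symm
  have par2 : Φ.τ (k + 1) ≫ Hc hC P k
      = Φ.τ (k + 1) ≫ (P.nabla (k + 1) 0 ≫ bdm0 GS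
          (P.winv (k + 1) 0 ≫ Hσ hC P k ≫ GS.ε₁ (k + 1) 0)
          (Hτ hC P k ≫ GS.ε₂ (k + 1) 0) glA) := by
    calc Φ.τ (k + 1) ≫ Hc hC P k
        = Yσm P k ≫ GS.ε₁ (k + 1) 0 := Hc_τ hC P k
      _ = (Φ.σ (k + 1) ≫ Hσ hC P k) ≫ GS.ε₁ (k + 1) 0 := by rw [Hσ_σ]
      _ = Φ.σ (k + 1) ≫ (Hσ hC P k ≫ GS.ε₁ (k + 1) 0) := Category.assoc _ _ _
      _ = Φ.τ (k + 1) ≫ (P.winv (k + 1) 0 ≫ Hσ hC P k ≫ GS.ε₁ (k + 1) 0) :=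
          (winvτa P k _).symm
      _ = _ := (τ_nbdm00 P _ _ _).symm
  have h := htp_pull (m := k + 1) hC (GSums.Btab (k + 1) 0) (by rw [dim_Btab]; omega)
    _ _ par1 par2 (pairUp hm a b hc)
  have vA := pull_nabla_bdm0 (j := k + 1) hm P
    (P.winv (k + 1) 0 ≫ Hσ hC P k ≫ GS.ε₁ (k + 1) 0)
    (Hτ hC P k ≫ GS.ε₂ (k + 1) 0) glA (pairUp hm a b hc)
  have v1 : pull (P.winv (k + 1) 0 ≫ Hσ hC P k ≫ GS.ε₁ (k + 1) 0) (pairUp hm a b hc)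
      = gwinv P (k + 1) 0 (pull (Hσ hC P k) a) := by
    rw [pull_comp, pull_comp, pairUp_ε₁]
    rfl
  have v2 : pull (Hτ hC P k ≫ GS.ε₂ (k + 1) 0) (pairUp hm a b hc)
      = pull (Hτ hC P k) b := by
    rw [pull_comp, pairUp_ε₂]
  rw [v1, v2] at vA
  rw [vA] at h
  exact h

end Collapse

end EckmannHilton

theorem pi_n_abelian {E : Type u} [Category.{v} E] (Φ : Coglob E) (GS : GSums Φ)
    (hC : GS.Contractible) (X : Eᵒᵖ ⥤ Type w) (hm : GS.IsModel X)
    (P : Pregroupoidal GS) (k : ℕ) (x : arr (Φ := Φ) X 0) :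
    ∀ α β : arr (Φ := Φ) X (k + 2),
      asrc α = unitIter P (k + 1) x → atgt α = unitIter P (k + 1) x →
      asrc β = unitIter P (k + 1) x → atgt β = unitIter P (k + 1) x →
      Htp (k + 2) (gcomp hm P (k + 1) 0 α β) (gcomp hm P (k + 1) 0 β α) := by
  intro α β hα1 hα2 hβ1 hβ2
  -- Abbreviations
  set uu := unitIter P (k + 1) x with huu
  set UU := unitIter P (k + 2) x with hUUdef
  set ee := gcomp hm P k 0 uu uu with heedef
  -- basic facts about the units
  have hUU1 : asrc UU = uu := by
    rw [asrc_eq_pull]; exact pull_σ_unit P x (k + 1)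
  have hUU2 : atgt UU = uu := by
    rw [atgt_eq_pull]; exact pull_τ_unit P x (k + 1)
  have gUU : gunit P uu = UU := gunit_unit P x (k + 1)
  have cmp : ∀ a b : arr (Φ := Φ) X (k + 2), asrc a = atgt b →
      Composable (k + 1) 0 a b := fun a b h => composable01.2 h
  have cong : ∀ {a b a' b' : arr (Φ := Φ) X (k + 2)}, asrc a = atgt b →
      asrc a' = atgt b' → Htp (k + 2) a a' → Htp (k + 2) b b' →
      Htp (k + 2) (gcomp hm P (k + 1) 0 a b) (gcomp hm P (k + 1) 0 a' b') :=
    fun h1 h2 e1 e2 => htp_gcomp hm P (composable01.2 h1) (composable01.2 h2) e1 e2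
  have T : ∀ {a b c : arr (Φ := Φ) X (k + 2)}, Htp (k + 2) a b → Htp (k + 2) b c →
      Htp (k + 2) a c := fun e1 e2 => htp_trans hm P e1 e2
  have S : ∀ {a b : arr (Φ := Φ) X (k + 2)}, Htp (k + 2) a b → Htp (k + 2) b a :=
    fun e => htp_symm P e
  -- endpoints of the various cells
  have srcP : ∀ {z : arr (Φ := Φ) X (k + 2)}, asrc z = uu →
      asrc (pull (pm P k) z) = ee := fun {z} hz1 => by
    rw [asrc_eq_pull, ← pull_comp, σ_pm]; exact pull_Yσm_z hm P k x hz1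
  have tgtP : ∀ {z : arr (Φ := Φ) X (k + 2)}, asrc z = uu → atgt z = uu →
      atgt (pull (pm P k) z) = ee := fun {z} hz1 hz2 => by
    rw [atgt_eq_pull, ← pull_comp, τ_pm]; exact pull_Yτm_z hm P k x hz1 hz2
  have srcQ : ∀ {z : arr (Φ := Φ) X (k + 2)}, asrc z = uu → atgt z = uu →
      asrc (pull (qm P k) z) = ee := fun {z} hz1 hz2 => by
    rw [asrc_eq_pull, ← pull_comp, σ_qm]; exact pull_Y'σm_z hm P k x hz1 hz2
  have tgtQ : ∀ {z : arr (Φ := Φ) X (k + 2)}, atgt z = uu →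
      atgt (pull (qm P k) z) = ee := fun {z} hz2 => by
    rw [atgt_eq_pull, ← pull_comp, τ_qm]; exact pull_Y'τm_z hm P k x hz2
  have srcTh : ∀ {z : arr (Φ := Φ) X (k + 2)}, asrc z = uu →
      asrc (pull (Hσ hC P k) z) = ee := fun {z} hz1 => by
    rw [asrc_eq_pull, ← pull_comp, Hσ_σ]; exact pull_Yσm_z hm P k x hz1
  have tgtTh : ∀ {z : arr (Φ := Φ) X (k + 2)},
      atgt (pull (Hσ hC P k) z) = asrc z := fun {z} => by
    rw [atgt_eq_pull, ← pull_comp, Hσ_τ, ← asrc_eq_pull]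
  have srcPh : ∀ {z : arr (Φ := Φ) X (k + 2)}, asrc z = uu → atgt z = uu →
      asrc (pull (Hτ hC P k) z) = ee := fun {z} hz1 hz2 => by
    rw [asrc_eq_pull, ← pull_comp, Hτ_σ]; exact pull_Yτm_z hm P k x hz1 hz2
  have tgtPh : ∀ {z : arr (Φ := Φ) X (k + 2)},
      atgt (pull (Hτ hC P k) z) = atgt z := fun {z} => by
    rw [atgt_eq_pull, ← pull_comp, Hτ_τ, ← atgt_eq_pull]
  have srcW1 : ∀ {z : arr (Φ := Φ) X (k + 2)}, atgt z = uu →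
      asrc (pull (H3 hC P k) z) = ee := fun {z} hz2 => by
    rw [asrc_eq_pull, ← pull_comp, H3_σ]; exact pull_Y'τm_z hm P k x hz2
  have srcW2 : ∀ {z : arr (Φ := Φ) X (k + 2)}, asrc z = uu → atgt z = uu →
      asrc (pull (H4 hC P k) z) = ee := fun {z} hz1 hz2 => by
    rw [asrc_eq_pull, ← pull_comp, H4_σ]; exact pull_Y'σm_z hm P k x hz1 hz2
  have srcinv : ∀ c : arr (Φ := Φ) X (k + 2), asrc (gwinv P (k + 1) 0 c) = atgt c :=
    fun c => by
      rw [asrc_eq_pull, gwinv_eq_pull, ← pull_comp, P.winv_σ₀, ← atgt_eq_pull]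
  have tgtinv : ∀ c : arr (Φ := Φ) X (k + 2), atgt (gwinv P (k + 1) 0 c) = asrc c :=
    fun c => by
      rw [atgt_eq_pull, gwinv_eq_pull, ← pull_comp, P.winv_τ₀, ← asrc_eq_pull]
  -- unit laws specialised to `UU`
  have hu1 : ∀ {z : arr (Φ := Φ) X (k + 2)}, asrc z = uu →
      Htp (k + 2) (gcomp hm P (k + 1) 0 z UU) z := fun {z} hz1 => by
    have h := htp_unit_right hC hm P k z
    rwa [hz1, gUU] at h
  have hu2 : ∀ {z : arr (Φ := Φ) X (k + 2)}, atgt z = uu →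
      Htp (k + 2) (gcomp hm P (k + 1) 0 UU z) z := fun {z} hz2 => by
    have h := htp_unit_left hC hm P k z
    rwa [hz2, gUU] at h
  -- constancy of the conjugating cells
  have cPh : ∀ {z : arr (Φ := Φ) X (k + 2)}, asrc z = uu → atgt z = uu →
      Htp (k + 2) (pull (Hτ hC P k) z) (pull (Hτ hC P k) UU) := fun {z} hz1 hz2 =>
    T (S (htp_Hτ P k hC (hu2 hz2)))
      (const_Hτ P k hC hm (cmp UU z (hUU1.trans hz2.symm)))
  have cTh : ∀ {z : arr (Φ := Φ) X (k + 2)}, asrc z = uu → atgt z = uu →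
      Htp (k + 2) (pull (Hσ hC P k) z) (pull (Hσ hC P k) UU) := fun {z} hz1 hz2 =>
    T (S (htp_Hσ P k hC (hu1 hz1)))
      (const_Hσ P k hC hm (cmp z UU (hz1.trans hUU2.symm)))
  have cW1 : ∀ {z : arr (Φ := Φ) X (k + 2)}, atgt z = uu →
      Htp (k + 2) (pull (H3 hC P k) z) (gunit P ee) := fun {z} hz2 =>
    T (T (S (htp_H3 P k hC (hu2 hz2)))
        (const_H3 P k hC hm (cmp UU z (hUU1.trans hz2.symm))))
      (scene_W1U hm P k x hC)
  have cW2 : ∀ {z : arr (Φ := Φ) X (k + 2)}, asrc z = uu →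
      Htp (k + 2) (pull (H4 hC P k) z) (gunit P ee) := fun {z} hz1 =>
    T (T (S (htp_H4 P k hC (hu1 hz1)))
        (const_H4 P k hC hm (cmp z UU (hz1.trans hUU2.symm))))
      (scene_W2U hm P k x hC)
  -- the inverse of the distinguished unit is the unit
  have inv1e : Htp (k + 2) (gwinv P (k + 1) 0 (gunit P ee)) (gunit P ee) := by
    have h1 := htp_inv_left hC hm P k (gunit P ee)
    rw [asrc_gunit] at h1
    have h2 := htp_unit_right hC hm P k (gwinv P (k + 1) 0 (gunit P ee))
    rw [srcinv, atgt_gunit] at h2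
    exact T (S h2) h1
  -- unit laws at `1e`
  have oneL : ∀ {c : arr (Φ := Φ) X (k + 2)}, atgt c = ee →
      Htp (k + 2) (gcomp hm P (k + 1) 0 (gunit P ee) c) c := fun {c} hc => by
    have h := htp_unit_left hC hm P k c
    rwa [hc] at h
  have oneR : ∀ {c : arr (Φ := Φ) X (k + 2)}, asrc c = ee →
      Htp (k + 2) (gcomp hm P (k + 1) 0 c (gunit P ee)) c := fun {c} hc => by
    have h := htp_unit_right hC hm P k c
    rwa [hc] at h
  -- the interchange cell collapses onto the unit
  have srcc : ∀ {a b : arr (Φ := Φ) X (k + 2)} (_ : asrc b = uu) (_ : atgt b = uu)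
      (hc : Composable (k + 1) 0 a b),
      asrc (pull (Hc hC P k) (pairUp hm a b hc)) = ee := fun {a b} hb1 hb2 hc => by
    rw [asrc_eq_pull, ← pull_comp, Hc_σ, pull_comp, pairUp_ε₂]
    exact pull_Yτm_z hm P k x hb1 hb2
  have tgtc : ∀ {a b : arr (Φ := Φ) X (k + 2)} (_ : asrc a = uu)
      (hc : Composable (k + 1) 0 a b),
      atgt (pull (Hc hC P k) (pairUp hm a b hc)) = ee := fun {a b} ha1 hc => by
    rw [atgt_eq_pull, ← pull_comp, Hc_τ, pull_comp, pairUp_ε₁]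
    exact pull_Yσm_z hm P k x ha1
  have ccP : ∀ {a b : arr (Φ := Φ) X (k + 2)} (_ : asrc a = uu) (_ : atgt a = uu)
      (_ : asrc b = uu) (_ : atgt b = uu) (hc : Composable (k + 1) 0 a b),
      Htp (k + 2) (pull (Hc hC P k) (pairUp hm a b hc)) (gunit P ee) := by
    intro a b ha1 ha2 hb1 hb2 hc
    have h1 := scene_cc hm P k hC hc
    have e1 := htp_gwinv P (cTh ha1 ha2)
    have e2 : Htp (k + 2) (pull (Hτ hC P k) b) (pull (Hσ hC P k) UU) :=
      T (cPh hb1 hb2) (S (scene_ThPh P k x hC))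
    have e3 := cong (by rw [srcinv, tgtTh, ha1, tgtPh, hb2])
      (by rw [srcinv, tgtTh]) e1 e2
    have e4 := htp_inv_left hC hm P k (pull (Hσ hC P k) UU)
    rw [srcTh hUU1] at e4
    exact T h1 (T e3 e4)
  -- multiplicativity of the padding
  have PPmult : ∀ {a b : arr (Φ := Φ) X (k + 2)} (_ : asrc a = uu) (_ : atgt a = uu)
      (_ : asrc b = uu) (_ : atgt b = uu) (hc : Composable (k + 1) 0 a b),
      Htp (k + 2) (pull (pm P k) (gcomp hm P (k + 1) 0 a b))
        (gcomp hm P (k + 1) 0 (pull (pm P k) a) (pull (pm P k) b)) := by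
    intro a b ha1 ha2 hb1 hb2 hc
    have h1 := scene_mult hm P k hC hc
    have h2 := cong (by rw [srcc hb1 hb2 hc, tgtP hb1 hb2])
      (by rw [asrc_gunit, tgtP hb1 hb2]) (ccP ha1 ha2 hb1 hb2 hc)
      (htp_refl P (pull (pm P k) b))
    have h3 := oneL (tgtP hb1 hb2)
    have h4 := cong
      (by rw [srcP ha1, atgt_gcomp0 hm P _ _ (cmp _ _ (by rw [srcc hb1 hb2 hc, tgtP hb1 hb2])),
        tgtc ha1 hc])
      (by rw [srcP ha1, tgtP hb1 hb2]) (htp_refl P (pull (pm P k) a)) (T h2 h3)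
    exact T h1 h4
  -- the `p`-padding agrees with the `q`-padding
  have PQ : ∀ {z : arr (Φ := Φ) X (k + 2)} (_ : asrc z = uu) (_ : atgt z = uu),
      Htp (k + 2) (pull (pm P k) z) (pull (qm P k) z) := by
    intro z hz1 hz2
    have h1 := scene_PQ hC hm P k z
    have e1 := T (cong (by rw [srcW1 hz2, tgtQ hz2]) (by rw [asrc_gunit, tgtQ hz2])
      (cW1 hz2) (htp_refl P (pull (qm P k) z))) (oneL (tgtQ hz2))
    have e2 := T (htp_gwinv P (cW2 hz1)) inv1e
    have e3 := cong
      (by rw [asrc_gcomp0 hm P _ _ (cmp _ _ (by rw [srcW1 hz2, tgtQ hz2])), srcQ hz1 hz2,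
        tgtinv, srcW2 hz1 hz2])
      (by rw [srcQ hz1 hz2, atgt_gunit]) e1 e2
    have e4 := oneR (srcQ hz1 hz2)
    exact T (S h1) (T e3 e4)
  -- packaged boundary facts for α, β and their composites
  have hcαβ : Composable (k + 1) 0 α β := cmp _ _ (hα1.trans hβ2.symm)
  have hcβα : Composable (k + 1) 0 β α := cmp _ _ (hβ1.trans hα2.symm)
  have hαβ1 : asrc (gcomp hm P (k + 1) 0 α β) = uu :=
    (asrc_gcomp0 hm P α β hcαβ).trans hβ1
  have hαβ2 : atgt (gcomp hm P (k + 1) 0 α β) = uu :=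
    (atgt_gcomp0 hm P α β hcαβ).trans hα2
  have hβα1 : asrc (gcomp hm P (k + 1) 0 β α) = uu :=
    (asrc_gcomp0 hm P β α hcβα).trans hα1
  have hβα2 : atgt (gcomp hm P (k + 1) 0 β α) = uu :=
    (atgt_gcomp0 hm P β α hcβα).trans hβ2
  -- the commutation of the paddings
  have swap : Htp (k + 2)
      (gcomp hm P (k + 1) 0 (pull (pm P k) α) (pull (pm P k) β))
      (gcomp hm P (k + 1) 0 (pull (pm P k) β) (pull (pm P k) α)) := by
    have c1 : Htp (k + 2)
        (gcomp hm P (k + 1) 0 (pull (pm P k) α) (pull (pm P k) β))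
        (gcomp hm P (k + 1) 0 (pull (pm P k) α) (pull (qm P k) β)) :=
      cong (by rw [srcP hα1, tgtP hβ1 hβ2]) (by rw [srcP hα1, tgtQ hβ2])
        (htp_refl P _) (PQ hβ1 hβ2)
    have c2 : Htp (k + 2)
        (gcomp hm P (k + 1) 0 (pull (pm P k) α) (pull (qm P k) β))
        (gcomp hm P (k + 1) 0 (pull (qm P k) β) (pull (pm P k) α)) := by
      have h := scene_comm hm P k x hC hα1 hα2 hβ1 hβ2
      rw [← pull_pm_z hm P k x hα1, ← pull_qm_z hm P k x hβ2] at h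
      exact h
    have c3 : Htp (k + 2)
        (gcomp hm P (k + 1) 0 (pull (qm P k) β) (pull (pm P k) α))
        (gcomp hm P (k + 1) 0 (pull (pm P k) β) (pull (pm P k) α)) :=
      cong (by rw [srcQ hβ1 hβ2, tgtP hα1 hα2]) (by rw [srcP hβ1, tgtP hα1 hα2])
        (S (PQ hβ1 hβ2)) (htp_refl P _)
    exact T c1 (T c2 c3)
  -- the composite paddings
  have Pab : Htp (k + 2) (pull (pm P k) (gcomp hm P (k + 1) 0 α β))
      (pull (pm P k) (gcomp hm P (k + 1) 0 β α)) := by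
    refine T (PPmult hα1 hα2 hβ1 hβ2 hcαβ) (T swap (S (PPmult hβ1 hβ2 hα1 hα2 hcβα)))
  -- conjugation: assemble both sides
  have main : ∀ (z : arr (Φ := Φ) X (k + 2)) (_ : asrc z = uu) (_ : atgt z = uu),
      Htp (k + 2) z
        (gcomp hm P (k + 1) 0
          (gcomp hm P (k + 1) 0 (pull (Hτ hC P k) UU) (pull (pm P k) z))
          (gwinv P (k + 1) 0 (pull (Hσ hC P k) UU))) := by
    intro z hz1 hz2
    have h1 := S (scene_V1 hC hm P k z)
    have e1 := cong (by rw [srcPh hz1 hz2, tgtP hz1 hz2])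
      (by rw [srcPh hUU1 hUU2, tgtP hz1 hz2]) (cPh hz1 hz2) (htp_refl P (pull (pm P k) z))
    have e2 := htp_gwinv P (cTh hz1 hz2)
    have e3 := cong
      (by rw [asrc_gcomp0 hm P _ _ (cmp _ _ (by rw [srcPh hz1 hz2, tgtP hz1 hz2])),
        srcP hz1, tgtinv, srcTh hz1])
      (by rw [asrc_gcomp0 hm P _ _ (cmp _ _ (by rw [srcPh hUU1 hUU2, tgtP hz1 hz2])),
        srcP hz1, tgtinv, srcTh hUU1]) e1 e2
    exact T h1 e3
  -- final chain
  have mα := main (gcomp hm P (k + 1) 0 α β) hαβ1 hαβ2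
  have mβ := main (gcomp hm P (k + 1) 0 β α) hβα1 hβα2
  refine T mα (T ?_ (S mβ))
  refine cong ?_ ?_ ?_ (htp_refl P _)
  · rw [asrc_gcomp0 hm P _ _ (cmp _ _ (by rw [srcPh hUU1 hUU2, tgtP hαβ1 hαβ2])),
      srcP hαβ1, tgtinv, srcTh hUU1]
  · rw [asrc_gcomp0 hm P _ _ (cmp _ _ (by rw [srcPh hUU1 hUU2, tgtP hβα1 hβα2])),
      srcP hβα1, tgtinv, srcTh hUU1]
  · exact cong (by rw [srcPh hUU1 hUU2, tgtP hαβ1 hαβ2])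
      (by rw [srcPh hUU1 hUU2, tgtP hβα1 hβα2]) (htp_refl P _) Pab
end
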